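/- arXiv:1409.2408 — 6 statements merged into one kernel-verified Lean document; each statement's English description precedes it below -/
import Mathlib

section
/- Let n, m be natural numbers and let H_1, …, H_m be affine hyperplanes in ℝ^n, i.e. for each k there is a nonzero linear functional f_k on ℝ^n and a real constant c_k with H_k = {x ∈ ℝ^n | f_k(x) = c_k}. Then the set of connected components of ℝ^n \ ⋃_{1 ≤ k ≤ m} H_k is finite, and its cardinality is at most ∑_{i=0}^{n} binom(m, i). -/
open Finset

/-- `x` realizes the sign vector `s` for the arrangement `(f, c)`. -/
def Realizes {n m : ℕ} (f : Fin m → ((Fin n → ℝ) →ₗ[ℝ] ℝ)) (c : Fin m → ℝ)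
    (x : Fin n → ℝ) (s : Fin m → Bool) : Prop :=
  ∀ k, (s k = true ∧ c k < f k x) ∨ (s k = false ∧ f k x < c k)

/-- The set of realizable sign vectors. -/
def RS {n m : ℕ} (f : Fin m → ((Fin n → ℝ) →ₗ[ℝ] ℝ)) (c : Fin m → ℝ) :
    Set (Fin m → Bool) := {s | ∃ x, Realizes f c x s}

lemma card_le_one' (α : Type*) [Subsingleton α] : Nat.card α ≤ 1 := by
  have := Nat.card_le_card_of_injective (fun _ : α => (() : Unit))
    (fun a b _ => Subsingleton.elim a b)
  simpa using this

lemma realizes_subsingleton_dim0 {m : ℕ} (f : Fin m → ((Fin 0 → ℝ) →ₗ[ℝ] ℝ))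
    (c : Fin m → ℝ) : (RS f c).Subsingleton := by
  rintro s ⟨x, hx⟩ t ⟨y, hy⟩
  have hx0 : x = 0 := Subsingleton.elim _ _
  have hy0 : y = 0 := Subsingleton.elim _ _
  subst hx0 hy0
  funext k
  rcases hx k with ⟨h1, h2⟩ | ⟨h1, h2⟩ <;> rcases hy k with ⟨h3, h4⟩ | ⟨h3, h4⟩ <;>
    simp_all [map_zero] <;> linarith

lemma ext_of_restrict {m : ℕ} {s t : Fin (m+1) → Bool}
    (h : (fun k : Fin m => s k.castSucc) = fun k : Fin m => t k.castSucc)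
    (h2 : s (Fin.last m) = t (Fin.last m)) : s = t := by
  funext k
  induction k using Fin.lastCases with
  | last => exact h2
  | cast k => exact congrFun h k

/-- Parametrize the hyperplane `{z | f_last z = c_last}` by `ℝ^n`, pulling back
the other affine functionals. -/
lemma exists_restriction {n m : ℕ} (f : Fin (m+1) → ((Fin (n+1) → ℝ) →ₗ[ℝ] ℝ))
    (c : Fin (m+1) → ℝ) (hz : f (Fin.last m) ≠ 0) :
    ∃ (g : Fin m → ((Fin n → ℝ) →ₗ[ℝ] ℝ)) (d : Fin m → ℝ),
      ∀ z : Fin (n+1) → ℝ, f (Fin.last m) z = c (Fin.last m) →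
        ∃ w : Fin n → ℝ, ∀ k : Fin m, g k w - d k = f k.castSucc z - c k.castSucc := by
  obtain ⟨v, hv⟩ : ∃ v, f (Fin.last m) v ≠ 0 := by
    by_contra h
    push_neg at h
    exact hz (LinearMap.ext fun x => by simp [h x])
  set L := f (Fin.last m) with hL
  have hsurj : Function.Surjective L := fun r =>
    ⟨(r / L v) • v, by rw [map_smul, smul_eq_mul]; field_simp⟩
  set x₀ : Fin (n+1) → ℝ := (c (Fin.last m) / L v) • v with hx₀
  have hx₀val : L x₀ = c (Fin.last m) := by rw [hx₀, map_smul, smul_eq_mul]; field_simp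
  have hrank : Module.finrank ℝ (LinearMap.ker L) = n := by
    have h1 := LinearMap.finrank_range_add_finrank_ker L
    have h2 : LinearMap.range L = ⊤ := LinearMap.range_eq_top.2 hsurj
    rw [h2] at h1
    simp [Module.finrank_fin_fun, Module.finrank_self] at h1
    omega
  obtain ⟨e⟩ : Nonempty ((Fin n → ℝ) ≃ₗ[ℝ] LinearMap.ker L) :=
    FiniteDimensional.nonempty_linearEquiv_of_finrank_eq
      (by rw [Module.finrank_fin_fun, hrank])
  refine ⟨fun k => (f k.castSucc).comp ((LinearMap.ker L).subtype.comp e.toLinearMap),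
    fun k => c k.castSucc - f k.castSucc x₀, fun z hzH => ?_⟩
  have hmem : z - x₀ ∈ LinearMap.ker L := by
    rw [LinearMap.mem_ker, map_sub, hzH, hx₀val, sub_self]
  refine ⟨e.symm ⟨z - x₀, hmem⟩, fun k => ?_⟩
  simp only [LinearMap.comp_apply, LinearEquiv.coe_coe, LinearEquiv.apply_symm_apply,
    Submodule.coe_subtype, map_sub]
  ring

/-- If a sign vector is realizable with both signs of the last hyperplane,
then a midpoint lies on the last hyperplane with the same signs elsewhere. -/
lemma mid_realizes {n m : ℕ} (f : Fin (m+1) → ((Fin n → ℝ) →ₗ[ℝ] ℝ)) (c : Fin (m+1) → ℝ)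
    {x y : Fin n → ℝ} {s t : Fin (m+1) → Bool}
    (hx : Realizes f c x s) (hy : Realizes f c y t)
    (hrt : ∀ k : Fin m, s k.castSucc = t k.castSucc)
    (hs : s (Fin.last m) = true) (ht : t (Fin.last m) = false) :
    ∃ z, f (Fin.last m) z = c (Fin.last m) ∧
      ∀ k : Fin m, (s k.castSucc = true ∧ c k.castSucc < f k.castSucc z) ∨
        (s k.castSucc = false ∧ f k.castSucc z < c k.castSucc) := by
  have ha : c (Fin.last m) < f (Fin.last m) x := by
    rcases hx (Fin.last m) with ⟨h1, h2⟩ | ⟨h1, h2⟩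
    · exact h2
    · rw [hs] at h1; exact absurd h1 (by simp)
  have hb : f (Fin.last m) y < c (Fin.last m) := by
    rcases hy (Fin.last m) with ⟨h1, h2⟩ | ⟨h1, h2⟩
    · rw [ht] at h1; exact absurd h1 (by simp)
    · exact h2
  set τ : ℝ := (c (Fin.last m) - f (Fin.last m) y) / (f (Fin.last m) x - f (Fin.last m) y)
    with hτ
  have hτ0 : 0 < τ := by
    apply div_pos <;> linarith
  have hτ1 : τ < 1 := by
    rw [hτ, div_lt_one (by linarith)]
    linarith
  refine ⟨y + τ • (x - y), ?_, fun k => ?_⟩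
  · have hne : f (Fin.last m) x - f (Fin.last m) y ≠ 0 := by linarith
    rw [map_add, map_smul, map_sub, smul_eq_mul, hτ, div_mul_cancel₀ _ hne]
    ring
  · have hval : ∀ j : Fin (m+1), f j (y + τ • (x - y)) =
        f j y + τ * (f j x - f j y) := fun j => by
      rw [map_add, map_smul, map_sub, smul_eq_mul]
    rcases hx k.castSucc with ⟨h1, h2⟩ | ⟨h1, h2⟩ <;>
      rcases hy k.castSucc with ⟨h3, h4⟩ | ⟨h3, h4⟩
    · exact Or.inl ⟨h1, by rw [hval]; nlinarith⟩
    · rw [hrt k] at h1; rw [h1] at h3; exact absurd h3 (by simp)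
    · rw [hrt k] at h1; rw [h1] at h3; exact absurd h3 (by simp)
    · exact Or.inr ⟨h1, by rw [hval]; nlinarith⟩

/-- Key counting lemma. -/
lemma count_RS : ∀ (n m : ℕ) (f : Fin m → ((Fin n → ℝ) →ₗ[ℝ] ℝ)) (c : Fin m → ℝ),
    Nat.card (RS f c) ≤ ∑ i ∈ Finset.range (n+1), Nat.choose m i := by
  intro n
  induction n with
  | zero =>
    intro m f c
    have : Subsingleton (RS f c) := (realizes_subsingleton_dim0 f c).coe_sort
    simpa using card_le_one' (RS f c)
  | succ n ihn =>
    intro m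
    induction m with
    | zero =>
      intro f c
      have : Subsingleton (RS f c) := by
        have : Subsingleton (Fin 0 → Bool) := inferInstance
        infer_instance
      have h1 := card_le_one' (RS f c)
      calc Nat.card (RS f c) ≤ 1 := h1
        _ ≤ ∑ i ∈ Finset.range (n+2), Nat.choose 0 i := by
            rw [Finset.sum_range_succ']
            simp
    | succ m ihm =>
      intro f c
      classical
      set f' : Fin m → ((Fin (n+1) → ℝ) →ₗ[ℝ] ℝ) := fun k => f k.castSucc with hf'
      set c' : Fin m → ℝ := fun k => c k.castSucc with hc'
      have hmono : ∑ i ∈ Finset.range (n+2), Nat.choose m i ≤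
          ∑ i ∈ Finset.range (n+2), Nat.choose (m+1) i :=
        Finset.sum_le_sum fun i _ => Nat.choose_le_choose i (Nat.le_succ m)
      by_cases hz : f (Fin.last m) = 0
      · -- last functional zero: restriction is injective on RS
        have hforce : ∀ s ∈ RS f c, s (Fin.last m) = decide (c (Fin.last m) < 0) := by
          rintro s ⟨x, hx⟩
          have h1 := hx (Fin.last m)
          rw [hz] at h1
          simp only [LinearMap.zero_apply] at h1
          rcases h1 with ⟨e1, l1⟩ | ⟨e1, l1⟩
          · rw [e1, decide_eq_true l1]
          · rw [e1, Eq.comm, decide_eq_false_iff_not]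
            intro hc; linarith
        set F : ↥(RS f c) → ↥(RS f' c') := fun p =>
          ⟨fun k => p.1 k.castSucc, p.2.elim fun x hx => ⟨x, fun k => hx k.castSucc⟩⟩
          with hF
        have hFinj : Function.Injective F := by
          intro p q h
          simp only [hF] at h
          have h' := congrArg Subtype.val h
          refine Subtype.ext (ext_of_restrict h' ?_)
          rw [hforce p.1 p.2, hforce q.1 q.2]
        calc Nat.card (RS f c) ≤ Nat.card (RS f' c') :=
              Nat.card_le_card_of_injective F hFinj
          _ ≤ ∑ i ∈ Finset.range (n+2), Nat.choose m i := ihm f' c'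
          _ ≤ _ := hmono
      · -- last functional nonzero: deletion-restriction
        obtain ⟨g, d, hgd⟩ := exists_restriction f c hz
        -- if both extensions of a restricted vector are realizable, it is realizable on H
        have hboth : ∀ s : Fin (m+1) → Bool, s ∈ RS f c → s (Fin.last m) = true →
            Function.update s (Fin.last m) false ∈ RS f c →
            (fun k : Fin m => s k.castSucc) ∈ RS g d := by
          rintro s ⟨x, hx⟩ hlast ⟨y, hy⟩
          obtain ⟨z, hz1, hz2⟩ := mid_realizes f c hx hy
            (fun k => (Function.update_of_ne (Fin.castSucc_lt_last k).ne _ _).symm)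
            hlast (Function.update_self _ _ _)
          obtain ⟨w, hw⟩ := hgd z hz1
          refine ⟨w, fun k => ?_⟩
          rcases hz2 k with ⟨h1, h2⟩ | ⟨h1, h2⟩
          · exact Or.inl ⟨h1, by have := hw k; linarith⟩
          · exact Or.inr ⟨h1, by have := hw k; linarith⟩
        have hres : ∀ p : ↥(RS f c), (fun k : Fin m => p.1 k.castSucc) ∈ RS f' c' :=
          fun p => p.2.elim fun x hx => ⟨x, fun k => hx k.castSucc⟩
        set F : ↥(RS f c) → ↥(RS f' c') ⊕ ↥(RS g d) := fun p =>
          if h : p.1 (Fin.last m) = true ∧ Function.update p.1 (Fin.last m) false ∈ RS f c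
          then Sum.inr ⟨fun k => p.1 k.castSucc, hboth p.1 p.2 h.1 h.2⟩
          else Sum.inl ⟨fun k => p.1 k.castSucc, hres p⟩ with hF
        have hFinj : Function.Injective F := by
          intro p q hpq
          simp only [hF] at hpq
          by_cases h1 : p.1 (Fin.last m) = true ∧
              Function.update p.1 (Fin.last m) false ∈ RS f c <;>
            by_cases h2 : q.1 (Fin.last m) = true ∧
              Function.update q.1 (Fin.last m) false ∈ RS f c
          · rw [dif_pos h1, dif_pos h2] at hpq
            have h' := congrArg Subtype.val (Sum.inr_injective hpq)
            exact Subtype.ext (ext_of_restrict h' (by rw [h1.1, h2.1]))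
          · rw [dif_pos h1, dif_neg h2] at hpq
            exact absurd hpq (by simp)
          · rw [dif_neg h1, dif_pos h2] at hpq
            exact absurd hpq (by simp)
          · rw [dif_neg h1, dif_neg h2] at hpq
            have h' := congrArg Subtype.val (Sum.inl_injective hpq)
            have hlast : p.1 (Fin.last m) = q.1 (Fin.last m) := by
              cases hp : p.1 (Fin.last m) <;> cases hq : q.1 (Fin.last m)
              · rfl
              · -- q last true, p last false : update q = p
                exfalso; apply h2
                refine ⟨hq, ?_⟩
                have heq : Function.update q.1 (Fin.last m) false = p.1 := by
                  refine ext_of_restrict ?_ ?_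
                  · funext k
                    rw [Function.update_of_ne (Fin.castSucc_lt_last k).ne]
                    exact (congrFun h' k).symm
                  · rw [Function.update_self, hp]
                rw [heq]; exact p.2
              · exfalso; apply h1
                refine ⟨hp, ?_⟩
                have heq : Function.update p.1 (Fin.last m) false = q.1 := by
                  refine ext_of_restrict ?_ ?_
                  · funext k
                    rw [Function.update_of_ne (Fin.castSucc_lt_last k).ne]
                    exact congrFun h' k
                  · rw [Function.update_self, hq]
                rw [heq]; exact q.2
              · rfl
            exact Subtype.ext (ext_of_restrict h' hlast)
        calc Nat.card (RS f c) ≤ Nat.card (↥(RS f' c') ⊕ ↥(RS g d)) :=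
              Nat.card_le_card_of_injective F hFinj
          _ = Nat.card (RS f' c') + Nat.card (RS g d) := Nat.card_sum
          _ ≤ (∑ i ∈ Finset.range (n+2), Nat.choose m i) +
                ∑ i ∈ Finset.range (n+1), Nat.choose m i :=
              Nat.add_le_add (ihm f' c') (ihn m g d)
          _ ≤ ∑ i ∈ Finset.range (n+2), Nat.choose (m+1) i := by
              rw [Finset.sum_range_succ' (fun i => Nat.choose (m+1) i) (n+1),
                Finset.sum_range_succ' (fun i => Nat.choose m i) (n+1)]
              simp only [Nat.choose_succ_succ, Nat.choose_zero_right,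
                Nat.succ_eq_add_one, Finset.sum_add_distrib]
              omega

/-- The number of regions (connected components of the complement of a
finite family of affine hyperplanes in ℝ^n) is finite and bounded by
∑_{i=0}^{n} binom(m, i). -/
theorem regions_card_le
    (n m : ℕ)
    (f : Fin m → ((Fin n → ℝ) →ₗ[ℝ] ℝ))
    (hf : ∀ k, f k ≠ 0)
    (c : Fin m → ℝ) :
    Finite (ConnectedComponents
      ↥((Set.univ : Set (Fin n → ℝ)) \ ⋃ k, {x | f k x = c k})) ∧
    Nat.card (ConnectedComponents
      ↥((Set.univ : Set (Fin n → ℝ)) \ ⋃ k, {x | f k x = c k}))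
      ≤ ∑ i ∈ Finset.range (n + 1), Nat.choose m i := by
  classical
  set U : Set (Fin n → ℝ) := (Set.univ : Set (Fin n → ℝ)) \ ⋃ k, {x | f k x = c k} with hU
  have hmemU : ∀ x : Fin n → ℝ, x ∈ U ↔ ∀ k, f k x ≠ c k := by
    intro x; simp [hU]
  have hreal : ∀ p : ↥U, Realizes f c p.1 (fun k => decide (c k < f k p.1)) := by
    intro p k
    rcases lt_or_gt_of_ne ((hmemU p.1).1 p.2 k) with h | h
    · exact Or.inr ⟨decide_eq_false (not_lt.2 h.le), h⟩
    · exact Or.inl ⟨decide_eq_true h, h⟩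
  have hcomp : ∀ p q : ↥U, q ∈ connectedComponent p → ∀ k, c k < f k q.1 →
      c k < f k p.1 := by
    intro p q hq k hk
    by_contra hpk
    have hplt : f k p.1 < c k :=
      lt_of_le_of_ne (not_lt.1 hpk) ((hmemU p.1).1 p.2 k)
    have hC : IsPreconnected (Subtype.val '' (connectedComponent p : Set ↥U)) :=
      isPreconnected_connectedComponent.image _ continuous_subtype_val.continuousOn
    have hmid : c k ∈ (f k) '' (Subtype.val '' connectedComponent p) := by
      apply hC.intermediate_value (Set.mem_image_of_mem _ mem_connectedComponent)
        (Set.mem_image_of_mem _ hq) (f k).continuous_of_finiteDimensional.continuousOn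
      exact ⟨hplt.le, hk.le⟩
    obtain ⟨r, ⟨pr, _, rfl⟩, hr⟩ := hmid
    exact (hmemU pr.1).1 pr.2 k hr
  have hsign : ∀ p q : ↥U, connectedComponent p = connectedComponent q →
      (fun k => decide (c k < f k p.1)) = fun k => decide (c k < f k q.1) := by
    intro p q h
    funext k
    have hqp : q ∈ connectedComponent p := h ▸ mem_connectedComponent
    have hpq : p ∈ connectedComponent q := h ▸ mem_connectedComponent
    by_cases hc : c k < f k q.1
    · rw [decide_eq_true (hcomp p q hqp k hc), decide_eq_true hc]
    · have hnp : ¬ c k < f k p.1 := fun hcp => hc (hcomp q p hpq k hcp)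
      rw [decide_eq_false hnp, decide_eq_false hc]
  set G : ConnectedComponents ↥U → ↥(RS f c) :=
    Quotient.lift (fun p : ↥U => (⟨fun k => decide (c k < f k p.1), p.1, hreal p⟩ :
        ↥(RS f c)))
      (fun p q h => Subtype.ext (hsign p q h)) with hG
  have cell_mem : ∀ (s : Fin m → Bool) (x : ↥U),
      (fun k => decide (c k < f k x.1)) = s →
      x.1 ∈ ⋂ k, (if s k = true then {y | c k < f k y} else {y | f k y < c k}) := by
    intro s x hs
    refine Set.mem_iInter.2 fun k => ?_
    have hk := congrFun hs k
    by_cases h : c k < f k x.1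
    · rw [if_pos (by rw [← hk]; exact decide_eq_true h)]
      exact h
    · rw [if_neg (by rw [← hk]; simp [h])]
      exact lt_of_le_of_ne (not_lt.1 h) ((hmemU x.1).1 x.2 k)
  have hGinj : Function.Injective G := by
    intro a b hab
    obtain ⟨p, rfl⟩ := ConnectedComponents.surjective_coe a
    obtain ⟨q, rfl⟩ := ConnectedComponents.surjective_coe b
    rw [hG] at hab
    have hsgn : (fun k => decide (c k < f k p.1)) = fun k => decide (c k < f k q.1) :=
      congrArg Subtype.val hab
    set s : Fin m → Bool := fun k => decide (c k < f k p.1) with hs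
    set K : Set (Fin n → ℝ) :=
      ⋂ k, (if s k = true then {y | c k < f k y} else {y | f k y < c k}) with hK
    have hKconv : Convex ℝ K := convex_iInter fun k => by
      split_ifs
      · exact convex_halfSpace_gt ((f k).isLinear) _
      · exact convex_halfSpace_lt ((f k).isLinear) _
    have hKsub : K ⊆ U := by
      intro x hx
      rw [hmemU]
      intro k
      have hxk := Set.mem_iInter.1 hx k
      split_ifs at hxk
      · exact ne_of_gt hxk
      · exact ne_of_lt hxk
    have hpK : p.1 ∈ K := cell_mem s p rfl
    have hqK : q.1 ∈ K := cell_mem s q hsgn.symm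
    have hpre : IsPreconnected (Subtype.val ⁻¹' K : Set ↥U) := by
      rw [← Topology.IsInducing.subtypeVal.isPreconnected_image,
        Subtype.image_preimage_coe, Set.inter_eq_self_of_subset_right hKsub]
      exact hKconv.isPreconnected
    have hq' : q ∈ connectedComponent p :=
      hpre.subset_connectedComponent (x := p) hpK hqK
    exact ConnectedComponents.coe_eq_coe.2 (connectedComponent_eq hq')
  refine ⟨Finite.of_injective G hGinj, ?_⟩
  exact le_trans (Nat.card_le_card_of_injective G hGinj) (count_RS n m f c)
end

section
/- Let n, m be natural numbers and let H_1, …, H_m be affine hyperplanes in ℝ^n, i.e. for each k there is a nonzero linear functional f_k on ℝ^n and a real constant c_k with H_k = {x ∈ ℝ^n | f_k(x) = c_k}. For each subset I of {1, …, m}, let N(I) denote the cardinality of the set of connected components of (⋂_{k ∈ I} H_k) \ (⋃_{k ∉ I} H_k), with the convention that the intersection over the empty set is ℝ^n. Then the total number of extended regions, ∑_{I ⊆ {1,…,m}} N(I), is at most ∑_{p=0}^{n} binom(m, p) · ∑_{i=0}^{n−p} binom(m−p, i). -/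
open Finset SignType Filter


open Finset

def Bf (n m : ℕ) : ℕ := ∑ k ∈ Finset.range (n + 1), Nat.choose m k * 2 ^ k

lemma vandermonde_aux (m K : ℕ) :
    ∑ p ∈ range (K + 1), Nat.choose m p * Nat.choose (m - p) (K - p)
      = Nat.choose m K * 2 ^ K := by
  rcases le_or_gt K m with h | h
  · rw [← Nat.sum_range_choose K, Finset.mul_sum]
    refine Finset.sum_congr rfl fun p hp => ?_
    have hpK : p ≤ K := by simpa [Nat.lt_succ_iff] using hp
    rw [← Nat.choose_mul (n := m) hpK]
  · have h1 : Nat.choose m K = 0 := Nat.choose_eq_zero_of_lt h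
    rw [h1, Nat.zero_mul]
    refine Finset.sum_eq_zero fun p hp => ?_
    rcases le_or_gt p m with hpm | hpm
    · have : m - p < K - p := by omega
      rw [Nat.choose_eq_zero_of_lt this, Nat.mul_zero]
    · rw [Nat.choose_eq_zero_of_lt hpm, Nat.zero_mul]

lemma rhs_eq_Bf (n m : ℕ) :
    ∑ p ∈ Finset.range (n + 1),
        Nat.choose m p * ∑ i ∈ Finset.range (n - p + 1), Nat.choose (m - p) i
      = Bf n m := by
  induction n with
  | zero => simp [Bf]
  | succ n ih =>
    have step : ∀ p ∈ range (n + 1),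
        Nat.choose m p * ∑ i ∈ Finset.range (n + 1 - p + 1), Nat.choose (m - p) i
          = Nat.choose m p * ∑ i ∈ Finset.range (n - p + 1), Nat.choose (m - p) i
            + Nat.choose m p * Nat.choose (m - p) (n + 1 - p) := by
      intro p hp
      have hpn : p ≤ n := by simpa [Nat.lt_succ_iff] using hp
      have h1 : n + 1 - p + 1 = (n - p + 1) + 1 := by omega
      have h2 : n - p + 1 = n + 1 - p := by omega
      rw [h1, Finset.sum_range_succ, Nat.mul_add, h2]
    rw [Finset.sum_range_succ, Finset.sum_congr rfl step, Finset.sum_add_distrib, ih]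
    have h3 : ∑ i ∈ range (n + 1 - (n+1) + 1), Nat.choose (m - (n+1)) i
        = Nat.choose (m - (n+1)) (n + 1 - (n+1)) := by simp
    rw [h3]
    have h4 : Bf (n+1) m = Bf n m + Nat.choose m (n+1) * 2 ^ (n+1) := by
      simp [Bf, Finset.sum_range_succ]
    have h5 := Finset.sum_range_succ
      (fun p => Nat.choose m p * Nat.choose (m - p) (n + 1 - p)) (n+1)
    rw [h4, ← vandermonde_aux m (n+1), h5]
    omega

lemma Bf_mono (n m : ℕ) : Bf n m ≤ Bf n (m + 1) :=
  Finset.sum_le_sum fun k _ => Nat.mul_le_mul_right _ (Nat.choose_le_choose k (Nat.le_succ m))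

lemma Bf_rec (n m : ℕ) : Bf (n + 1) (m + 1) = Bf (n + 1) m + 2 * Bf n m := by
  have peel : ∀ q : ℕ, Bf (n+1) q
      = (∑ k ∈ range (n+1), Nat.choose q (k+1) * 2 ^ (k+1)) + 1 := by
    intro q
    rw [Bf, Finset.sum_range_succ']
    simp
  rw [peel, peel]
  have : ∀ k ∈ range (n+1), Nat.choose (m+1) (k+1) * 2 ^ (k+1)
      = Nat.choose m (k+1) * 2 ^ (k+1) + 2 * (Nat.choose m k * 2 ^ k) := by
    intro k _
    rw [Nat.choose_succ_succ m k, Nat.add_mul, pow_succ]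
    ring
  rw [Finset.sum_congr rfl this, Finset.sum_add_distrib, ← Finset.mul_sum]
  simp [Bf]
  omega

lemma one_le_Bf (n m : ℕ) : 1 ≤ Bf n m := by
  have : Nat.choose m 0 * 2 ^ 0 ≤ Bf n m :=
    Finset.single_le_sum (f := fun k => Nat.choose m k * 2 ^ k) (fun _ _ => Nat.zero_le _)
      (Finset.mem_range.2 (Nat.succ_pos n))
  simpa using this



def Rz (n m : ℕ) (L : Fin m → ((Fin n → ℝ) →ₗ[ℝ] ℝ)) (d : Fin m → ℝ) :
    Set (Fin m → SignType) :=
  {σ | ∃ x : Fin n → ℝ, ∀ k, SignType.sign (L k x - d k) = σ k}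

/-- Perturbation: from a cell point on the hyperplane and one off it,
get a cell point strictly on the other side. -/
lemma perturb {n m : ℕ} (L : Fin m → ((Fin n → ℝ) →ₗ[ℝ] ℝ)) (d : Fin m → ℝ)
    (g : (Fin n → ℝ) →ₗ[ℝ] ℝ) (e : ℝ) (τ : Fin m → SignType)
    (x y : Fin n → ℝ) (hx : ∀ k, SignType.sign (L k x - d k) = τ k)
    (hy : ∀ k, SignType.sign (L k y - d k) = τ k)
    (hgx : g x = e) (hgy : g y ≠ e) :
    ∃ z : Fin n → ℝ, (∀ k, SignType.sign (L k z - d k) = τ k) ∧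
      SignType.sign (g z - e) = - SignType.sign (g y - e) := by
  set F : ℝ → (Fin n → ℝ) := fun t => x + t • (x - y) with hF
  have hval : ∀ (l : (Fin n → ℝ) →ₗ[ℝ] ℝ) (c : ℝ) (t : ℝ),
      l (F t) - c = (l x - c) + t * ((l x - c) - (l y - c)) := by
    intro l c t
    simp only [hF, map_add, map_smul, map_sub, smul_eq_mul]
    ring
  have key : ∀ k, ∀ᶠ t in nhdsWithin (0:ℝ) (Set.Ioi 0),
      SignType.sign (L k (F t) - d k) = τ k := by
    intro k
    set a := L k x - d k with ha
    set b := L k y - d k with hb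
    have hsab : SignType.sign a = SignType.sign b := (hx k).trans (hy k).symm
    rcases lt_trichotomy a 0 with h | h | h
    · have hcont : Continuous fun t : ℝ => a + t * (a - b) := by fun_prop
      have htend : Tendsto (fun t : ℝ => a + t * (a - b)) (nhds 0) (nhds a) := by
        simpa using hcont.tendsto 0
      have hev : ∀ᶠ t in nhds (0:ℝ), a + t * (a - b) < 0 :=
        htend.eventually (eventually_lt_nhds h)
      refine (hev.filter_mono nhdsWithin_le_nhds).mono fun t ht => ?_
      rw [hval, ← ha, ← hb, sign_neg ht, ← hx k, ← ha, sign_neg h]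
    · have hb0 : b = 0 := by
        have : SignType.sign b = 0 := by rw [← hsab, h, sign_zero]
        exact sign_eq_zero_iff.mp this
      refine Eventually.of_forall fun t => ?_
      rw [hval, ← ha, ← hb, h, hb0, ← hx k, ← ha, h]
      norm_num
    · have hcont : Continuous fun t : ℝ => a + t * (a - b) := by fun_prop
      have htend : Tendsto (fun t : ℝ => a + t * (a - b)) (nhds 0) (nhds a) := by
        simpa using hcont.tendsto 0
      have hev : ∀ᶠ t in nhds (0:ℝ), 0 < a + t * (a - b) :=
        htend.eventually (eventually_gt_nhds h)
      refine (hev.filter_mono nhdsWithin_le_nhds).mono fun t ht => ?_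
      rw [hval, ← ha, ← hb, sign_pos ht, ← hx k, ← ha, sign_pos h]
  have keyg : ∀ᶠ t in nhdsWithin (0:ℝ) (Set.Ioi 0),
      SignType.sign (g (F t) - e) = - SignType.sign (g y - e) := by
    refine eventually_mem_nhdsWithin.mono fun t (ht : t ∈ Set.Ioi 0) => ?_
    have hgt : g (F t) - e = - (t * (g y - e)) := by
      rw [hval g e t, hgx]
      ring
    rcases lt_or_gt_of_ne (sub_ne_zero.mpr hgy) with hlt | hgt2
    · have : 0 < g (F t) - e := by
        rw [hgt]
        have : t * (g y - e) < 0 := mul_neg_of_pos_of_neg ht hlt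
        linarith
      rw [sign_pos this, sign_neg hlt]
      decide
    · have : g (F t) - e < 0 := by
        rw [hgt]
        have : 0 < t * (g y - e) := mul_pos ht hgt2
        linarith
      rw [sign_neg this, sign_pos hgt2]
  obtain ⟨t, h1, h2⟩ := ((eventually_all.2 key).and keyg).exists
  exact ⟨F t, h1, h2⟩

/-- Convexity/IVT: a cell crossing the hyperplane meets it. -/
lemma cross_zero {n m : ℕ} (L : Fin m → ((Fin n → ℝ) →ₗ[ℝ] ℝ)) (d : Fin m → ℝ)
    (g : (Fin n → ℝ) →ₗ[ℝ] ℝ) (e : ℝ) (τ : Fin m → SignType)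
    (x y : Fin n → ℝ) (hx : ∀ k, SignType.sign (L k x - d k) = τ k)
    (hy : ∀ k, SignType.sign (L k y - d k) = τ k)
    (hgx : g x < e) (hgy : e < g y) :
    ∃ z : Fin n → ℝ, (∀ k, SignType.sign (L k z - d k) = τ k) ∧ g z = e := by
  set t : ℝ := (e - g x) / (g y - g x) with ht
  have hden : 0 < g y - g x := by linarith
  have ht0 : 0 < t := div_pos (by linarith) hden
  have ht1 : t < 1 := (div_lt_one hden).2 (by linarith)
  refine ⟨x + t • (y - x), fun k => ?_, ?_⟩
  · have hval : L k (x + t • (y - x)) - d k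
        = (1 - t) * (L k x - d k) + t * (L k y - d k) := by
      simp only [map_add, map_smul, map_sub, smul_eq_mul]
      ring
    have hsab : SignType.sign (L k x - d k) = SignType.sign (L k y - d k) :=
      (hx k).trans (hy k).symm
    rw [hval, ← hx k]
    rcases lt_trichotomy (L k x - d k) 0 with h | h | h
    · have hb : L k y - d k < 0 := by
        have : SignType.sign (L k y - d k) = -1 := by rw [← hsab, sign_neg h]
        exact sign_eq_neg_one_iff.mp this
      have : (1 - t) * (L k x - d k) + t * (L k y - d k) < 0 := by
        have h1 : (1 - t) * (L k x - d k) < 0 := mul_neg_of_pos_of_neg (by linarith) h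
        have h2 : t * (L k y - d k) < 0 := mul_neg_of_pos_of_neg ht0 hb
        linarith
      rw [sign_neg this, sign_neg h]
    · have hb : L k y - d k = 0 := by
        have : SignType.sign (L k y - d k) = 0 := by rw [← hsab, h, sign_zero]
        exact sign_eq_zero_iff.mp this
      rw [h, hb]
      norm_num
    · have hb : 0 < L k y - d k := by
        have : SignType.sign (L k y - d k) = 1 := by rw [← hsab, sign_pos h]
        exact sign_eq_one_iff.mp this
      have : 0 < (1 - t) * (L k x - d k) + t * (L k y - d k) := by
        have h1 : 0 < (1 - t) * (L k x - d k) := mul_pos (by linarith) h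
        have h2 : 0 < t * (L k y - d k) := mul_pos ht0 hb
        linarith
      rw [sign_pos this, sign_pos h]
  · have : g (x + t • (y - x)) = g x + t * (g y - g x) := by
      simp only [map_add, map_smul, map_sub, smul_eq_mul]
    rw [this, ht, div_mul_cancel₀ _ (ne_of_gt hden)]
    ring

/-- If a cell contains points on which `g - e` has different signs,
then it contains points strictly on both sides. -/
lemma crossed_of_sign_ne {n m : ℕ} (L : Fin m → ((Fin n → ℝ) →ₗ[ℝ] ℝ)) (d : Fin m → ℝ)
    (g : (Fin n → ℝ) →ₗ[ℝ] ℝ) (e : ℝ) (τ : Fin m → SignType)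
    (x y : Fin n → ℝ) (hx : ∀ k, SignType.sign (L k x - d k) = τ k)
    (hy : ∀ k, SignType.sign (L k y - d k) = τ k)
    (hne : SignType.sign (g x - e) ≠ SignType.sign (g y - e)) :
    (∃ x, (∀ k, SignType.sign (L k x - d k) = τ k) ∧ g x < e) ∧
    (∃ y, (∀ k, SignType.sign (L k y - d k) = τ k) ∧ e < g y) := by
  rcases lt_trichotomy (g x - e) 0 with hxv | hxv | hxv <;>
    rcases lt_trichotomy (g y - e) 0 with hyv | hyv | hyv
  · exact absurd (by rw [sign_neg hxv, sign_neg hyv]) hne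
  · -- g y = e, g x < e : perturb from y
    obtain ⟨z, hz, hzs⟩ := perturb L d g e τ y x hy hx (by linarith) (by intro h; rw [h, sub_self] at hxv; exact absurd hxv (by norm_num))
    rw [sign_neg hxv] at hzs
    have : 0 < g z - e := sign_eq_one_iff.mp (by rw [hzs]; decide)
    exact ⟨⟨x, hx, by linarith⟩, ⟨z, hz, by linarith⟩⟩
  · exact ⟨⟨x, hx, by linarith⟩, ⟨y, hy, by linarith⟩⟩
  · -- g x = e, g y < e
    obtain ⟨z, hz, hzs⟩ := perturb L d g e τ x y hx hy (by linarith) (by intro h; rw [h, sub_self] at hyv; exact absurd hyv (by norm_num))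
    rw [sign_neg hyv] at hzs
    have : 0 < g z - e := sign_eq_one_iff.mp (by rw [hzs]; decide)
    exact ⟨⟨y, hy, by linarith⟩, ⟨z, hz, by linarith⟩⟩
  · exact absurd (by rw [hxv, hyv]) hne
  · -- g x = e, g y > e
    obtain ⟨z, hz, hzs⟩ := perturb L d g e τ x y hx hy (by linarith) (by intro h; rw [h, sub_self] at hyv; exact absurd hyv (by norm_num))
    rw [sign_pos hyv] at hzs
    have : g z - e < 0 := sign_eq_neg_one_iff.mp (by rw [hzs])
    exact ⟨⟨z, hz, by linarith⟩, ⟨y, hy, by linarith⟩⟩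
  · exact ⟨⟨y, hy, by linarith⟩, ⟨x, hx, by linarith⟩⟩
  · -- g y = e, g x > e
    obtain ⟨z, hz, hzs⟩ := perturb L d g e τ y x hy hx (by linarith) (by intro h; rw [h, sub_self] at hxv; exact absurd hxv (by norm_num))
    rw [sign_pos hxv] at hzs
    have : g z - e < 0 := sign_eq_neg_one_iff.mp (by rw [hzs])
    exact ⟨⟨z, hz, by linarith⟩, ⟨x, hx, by linarith⟩⟩
  · exact absurd (by rw [sign_pos hxv, sign_pos hyv]) hne

theorem Rz_ncard_le (m : ℕ) : ∀ (n : ℕ) (L : Fin m → ((Fin n → ℝ) →ₗ[ℝ] ℝ))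
    (d : Fin m → ℝ), (Rz n m L d).ncard ≤ Bf n m := by
  induction m with
  | zero =>
    intro n L d
    calc (Rz n 0 L d).ncard ≤ (Set.univ : Set (Fin 0 → SignType)).ncard :=
          Set.ncard_le_ncard (Set.subset_univ _) (Set.toFinite _)
      _ = 1 := by rw [Set.ncard_univ]; simp [Nat.card_eq_fintype_card]
      _ ≤ Bf n 0 := one_le_Bf n 0
  | succ m ih =>
    intro n L d
    classical
    set g := L (Fin.last m) with hg
    set e := d (Fin.last m) with he
    set L' : Fin m → ((Fin n → ℝ) →ₗ[ℝ] ℝ) := fun k => L k.castSucc with hL'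
    set d' : Fin m → ℝ := fun k => d k.castSucc with hd'
    set C : Set (Fin m → SignType) :=
      {τ | (∃ x, (∀ k, SignType.sign (L' k x - d' k) = τ k) ∧ g x < e) ∧
           (∃ y, (∀ k, SignType.sign (L' k y - d' k) = τ k) ∧ e < g y)} with hC
    set F := Rz n (m+1) L d with hFdef
    set G := Rz n m L' d' with hGdef
    set F₁ : Set (Fin (m+1) → SignType) := {σ ∈ F | Fin.init σ ∉ C} with hF1
    set F₂ : Set (Fin (m+1) → SignType) := {σ ∈ F | Fin.init σ ∈ C} with hF2
    have hinit : ∀ σ ∈ F, Fin.init σ ∈ G := by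
      rintro σ ⟨x, hx⟩
      exact ⟨x, fun k => hx k.castSucc⟩
    have hCsubG : C ⊆ G := by
      rintro τ ⟨⟨x, hx, _⟩, _⟩
      exact ⟨x, hx⟩
    -- F₁ injects into G \ C
    have hinj : Set.InjOn Fin.init F₁ := by
      rintro σ ⟨⟨x, hx⟩, hnc⟩ σ' ⟨⟨y, hy⟩, _⟩ heq
      have hlast : σ (Fin.last m) = σ' (Fin.last m) := by
        by_contra hne
        apply hnc
        have hx' : ∀ k : Fin m, SignType.sign (L' k x - d' k) = Fin.init σ k :=
          fun k => hx k.castSucc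
        have hy' : ∀ k : Fin m, SignType.sign (L' k y - d' k) = Fin.init σ k := by
          intro k
          rw [show Fin.init σ k = Fin.init σ' k from congrFun heq k]
          exact hy k.castSucc
        have hnesign : SignType.sign (g x - e) ≠ SignType.sign (g y - e) := by
          rw [hx (Fin.last m), hy (Fin.last m)]
          exact hne
        exact crossed_of_sign_ne L' d' g e (Fin.init σ) x y hx' hy' hnesign
      funext k
      induction k using Fin.lastCases with
      | last => exact hlast
      | cast k => exact congrFun heq k
    have himg : Fin.init '' F₁ ⊆ G \ C := by
      rintro τ ⟨σ, hσ, rfl⟩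
      exact ⟨hinit σ hσ.1, hσ.2⟩
    have hcard1 : F₁.ncard ≤ (G \ C).ncard := by
      rw [← Set.ncard_image_of_injOn hinj]
      exact Set.ncard_le_ncard himg (Set.toFinite _)
    -- F₂ is covered by three copies of C
    have hcov : F₂ ⊆ (fun τ : Fin m → SignType => (Fin.snoc τ (-1) : Fin (m+1) → SignType)) '' C ∪
        ((fun τ : Fin m → SignType => (Fin.snoc τ 0 : Fin (m+1) → SignType)) '' C ∪
         (fun τ : Fin m → SignType => (Fin.snoc τ 1 : Fin (m+1) → SignType)) '' C) := by
      rintro σ ⟨hσF, hσC⟩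
      have hsnoc : Fin.snoc (Fin.init σ) (σ (Fin.last m)) = σ := Fin.snoc_init_self σ
      rcases hval : σ (Fin.last m) with _ | _ | _
      · rw [hval] at hsnoc
        exact Or.inr (Or.inl ⟨Fin.init σ, hσC, hsnoc⟩)
      · rw [hval] at hsnoc
        exact Or.inl ⟨Fin.init σ, hσC, hsnoc⟩
      · rw [hval] at hsnoc
        exact Or.inr (Or.inr ⟨Fin.init σ, hσC, hsnoc⟩)
    have hcard2 : F₂.ncard ≤ 3 * C.ncard := by
      calc F₂.ncard ≤ ((fun τ : Fin m → SignType => (Fin.snoc τ (-1) : Fin (m+1) → SignType)) '' C).ncard +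
            (((fun τ : Fin m → SignType => (Fin.snoc τ 0 : Fin (m+1) → SignType)) '' C).ncard +
             ((fun τ : Fin m → SignType => (Fin.snoc τ 1 : Fin (m+1) → SignType)) '' C).ncard) := by
              refine (Set.ncard_le_ncard hcov (Set.toFinite _)).trans ?_
              refine (Set.ncard_union_le _ _).trans ?_
              gcongr
              exact Set.ncard_union_le _ _
        _ ≤ C.ncard + (C.ncard + C.ncard) := by
              gcongr <;> exact Set.ncard_image_le (Set.toFinite _)
        _ = 3 * C.ncard := by ring
    have hsplit : F.ncard ≤ F₁.ncard + F₂.ncard := by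
      have : F = F₁ ∪ F₂ := by
        ext σ
        by_cases h : Fin.init σ ∈ C <;> simp [hF1, hF2, h]
      rw [this]
      exact Set.ncard_union_le _ _
    have hGC : (G \ C).ncard + C.ncard = G.ncard :=
      Set.ncard_diff_add_ncard_of_subset hCsubG (Set.toFinite _)
    have hmain : F.ncard ≤ G.ncard + 2 * C.ncard := by
      have := hsplit.trans (Nat.add_le_add hcard1 hcard2)
      omega
    -- now bound C
    by_cases hg0 : g = 0
    · have hCempty : C = ∅ := by
        ext τ
        simp only [hC, Set.mem_setOf_eq, Set.mem_empty_iff_false, iff_false]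
        rintro ⟨⟨x, _, hxlt⟩, ⟨y, _, hylt⟩⟩
        rw [hg0] at hxlt hylt
        simp at hxlt hylt
        linarith
      rw [hCempty] at hmain
      simp at hmain
      exact hmain.trans ((ih n L' d').trans (Bf_mono n m))
    · obtain ⟨v, hv⟩ : ∃ v, g v ≠ 0 := by
        by_contra h
        push_neg at h
        exact hg0 (LinearMap.ext fun v => by rw [h v, LinearMap.zero_apply])
      rcases n with _ | n'
      · exact absurd (Subsingleton.elim v 0 ▸ map_zero g) hv
      -- parametrize the hyperplane g = e
      set x0 : Fin (n'+1) → ℝ := (e / g v) • v with hx0def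
      have hx0 : g x0 = e := by
        rw [hx0def, map_smul, smul_eq_mul, div_mul_cancel₀ _ hv]
      have hkerrank : Module.finrank ℝ (LinearMap.ker g) = n' := by
        have h1 := LinearMap.finrank_range_add_finrank_ker g
        have h2 : LinearMap.range g = ⊤ := by
          rw [LinearMap.range_eq_top]
          intro r
          exact ⟨(r / g v) • v, by rw [map_smul, smul_eq_mul, div_mul_cancel₀ _ hv]⟩
        rw [h2, finrank_top, Module.finrank_self, Module.finrank_fin_fun] at h1
        omega
      obtain ⟨eqv⟩ := FiniteDimensional.nonempty_linearEquiv_of_finrank_eq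
        (show Module.finrank ℝ (Fin n' → ℝ) = Module.finrank ℝ (LinearMap.ker g) by
          rw [Module.finrank_fin_fun, hkerrank])
      set E : (Fin n' → ℝ) →ₗ[ℝ] (Fin (n'+1) → ℝ) :=
        (LinearMap.ker g).subtype.comp eqv.toLinearMap with hE
      set L'' : Fin m → ((Fin n' → ℝ) →ₗ[ℝ] ℝ) := fun k => (L' k).comp E with hL''
      set d'' : Fin m → ℝ := fun k => d' k - L' k x0 with hd''
      have hCsub : C ⊆ Rz n' m L'' d'' := by
        rintro τ ⟨⟨x, hx, hxlt⟩, ⟨y, hy, hylt⟩⟩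
        obtain ⟨z, hz, hze⟩ := cross_zero L' d' g e τ x y hx hy hxlt hylt
        have hzker : z - x0 ∈ LinearMap.ker g := by
          rw [LinearMap.mem_ker, map_sub, hze, hx0, sub_self]
        refine ⟨eqv.symm ⟨z - x0, hzker⟩, fun k => ?_⟩
        have hEu : E (eqv.symm ⟨z - x0, hzker⟩) = z - x0 := by
          rw [hE]
          simp
        rw [hL'', hd'']
        simp only [LinearMap.comp_apply, hEu, map_sub]
        rw [show L' k z - L' k x0 - (d' k - L' k x0) = L' k z - d' k by ring]
        exact hz k
      have hCcard : C.ncard ≤ Bf n' m :=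
        (Set.ncard_le_ncard hCsub (Set.toFinite _)).trans (ih n' L'' d'')
      have : F.ncard ≤ Bf (n'+1) m + 2 * Bf n' m := by
        have h1 := ih (n'+1) L' d'
        rw [← hGdef] at h1
        omega
      rw [← Bf_rec n' m] at this
      exact this

lemma memS_iff {n m : ℕ} (f : Fin m → ((Fin n → ℝ) →ₗ[ℝ] ℝ)) (c : Fin m → ℝ)
    (I : Finset (Fin m)) (x : Fin n → ℝ) :
    x ∈ ((⋂ k ∈ I, {x : Fin n → ℝ | f k x = c k}) \
        (⋃ k ∈ Iᶜ, {x : Fin n → ℝ | f k x = c k}))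
      ↔ (∀ k, k ∈ I ↔ f k x = c k) := by
  simp only [Set.mem_diff, Set.mem_iInter, Set.mem_iUnion, Set.mem_setOf_eq,
    Finset.mem_compl, not_exists, exists_prop, not_and]
  constructor
  · rintro ⟨h1, h2⟩ k
    refine ⟨h1 k, fun hk => ?_⟩
    by_contra hkI
    exact h2 k hkI hk
  · intro h
    exact ⟨fun k hk => (h k).1 hk, fun k hk hfk => hk ((h k).2 hfk)⟩

lemma cell_convex {n m : ℕ} (f : Fin m → ((Fin n → ℝ) →ₗ[ℝ] ℝ)) (c : Fin m → ℝ)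
    (σ : Fin m → SignType) :
    Convex ℝ {x : Fin n → ℝ | ∀ k, SignType.sign (f k x - c k) = σ k} := by
  intro x hx y hy a b ha hb hab
  intro k
  have hv : f k (a • x + b • y) - c k = a * (f k x - c k) + b * (f k y - c k) := by
    rw [map_add, map_smul, map_smul, smul_eq_mul, smul_eq_mul]
    linear_combination c k * hab
  rw [hv]
  have hxk := hx k
  have hyk := hy k
  rcases hσ : σ k with _ | _ | _
  · rw [hσ] at hxk hyk
    have h1 : f k x - c k = 0 := sign_eq_zero_iff.mp hxk
    have h2 : f k y - c k = 0 := sign_eq_zero_iff.mp hyk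
    rw [h1, h2]
    simp
  · rw [hσ] at hxk hyk
    have h1 : f k x - c k < 0 := sign_eq_neg_one_iff.mp hxk
    have h2 : f k y - c k < 0 := sign_eq_neg_one_iff.mp hyk
    have : a * (f k x - c k) + b * (f k y - c k) < 0 := by
      rcases ha.lt_or_eq with ha' | ha'
      · nlinarith
      · nlinarith
    exact sign_neg this
  · rw [hσ] at hxk hyk
    have h1 : 0 < f k x - c k := sign_eq_one_iff.mp hxk
    have h2 : 0 < f k y - c k := sign_eq_one_iff.mp hyk
    have : 0 < a * (f k x - c k) + b * (f k y - c k) := by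
      rcases ha.lt_or_eq with ha' | ha'
      · nlinarith
      · nlinarith
    exact sign_pos this

/-- The key per-`I` structure: an injection of components into sign vectors. -/
lemma component_injection {n m : ℕ} (f : Fin m → ((Fin n → ℝ) →ₗ[ℝ] ℝ)) (c : Fin m → ℝ)
    (I : Finset (Fin m)) :
    ∃ φ : ConnectedComponents
        ↥((⋂ k ∈ I, {x : Fin n → ℝ | f k x = c k}) \
          (⋃ k ∈ Iᶜ, {x : Fin n → ℝ | f k x = c k})) → (Fin m → SignType),
      Function.Injective φ ∧
      ∀ z, φ (ConnectedComponents.mk z) = fun k => SignType.sign (f k z.val - c k) := by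
  classical
  set S : Set (Fin n → ℝ) := (⋂ k ∈ I, {x : Fin n → ℝ | f k x = c k}) \
      (⋃ k ∈ Iᶜ, {x : Fin n → ℝ | f k x = c k}) with hSdef
  set sv : (Fin n → ℝ) → (Fin m → SignType) := fun x k => SignType.sign (f k x - c k) with hsv
  -- the sign vector map is locally constant on S
  have locconst : IsLocallyConstant (fun z : ↥S => sv z.val) := by
    rw [IsLocallyConstant.iff_eventually_eq]
    intro z
    have hev : ∀ᶠ w in nhds z, ∀ k, sv (Subtype.val w) k = sv z.val k := by
      rw [Filter.eventually_all]
      intro k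
      by_cases hk : k ∈ I
      · refine Eventually.of_forall fun w => ?_
        have h1 : f k w.val = c k := ((memS_iff f c I w.val).mp w.2 k).1 hk
        have h2 : f k z.val = c k := ((memS_iff f c I z.val).mp z.2 k).1 hk
        simp [hsv, h1, h2]
      · have hz : f k z.val ≠ c k := fun h => hk (((memS_iff f c I z.val).mp z.2 k).2 h)
        have hcont : Continuous fun w : ↥S => f k w.val - c k :=
          ((f k).continuous_of_finiteDimensional.comp continuous_subtype_val).sub
            continuous_const
        rcases lt_or_gt_of_ne (sub_ne_zero.mpr hz) with h | h
        · refine ((hcont.tendsto z).eventually (eventually_lt_nhds h)).mono fun w hw => ?_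
          simp only [hsv]
          rw [sign_neg hw, sign_neg h]
        · refine ((hcont.tendsto z).eventually (eventually_gt_nhds h)).mono fun w hw => ?_
          simp only [hsv]
          rw [sign_pos hw, sign_pos h]
    exact hev.mono fun w hw => funext hw
  -- it descends to connected components
  have hwd : ∀ a b : ↥S, (connectedComponentSetoid ↥S).r a b → sv a.val = sv b.val := by
    intro a b hab
    have hb : b ∈ connectedComponent a := by
      have : connectedComponent a = connectedComponent b := hab
      rw [this]
      exact mem_connectedComponent
    exact locconst.apply_eq_of_isPreconnected isPreconnected_connectedComponent
      mem_connectedComponent hb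
  refine ⟨Quotient.lift (fun z : ↥S => sv z.val) hwd, ?_, fun z => rfl⟩
  -- injectivity: cells are connected
  intro a b hab
  obtain ⟨za, rfl⟩ := ConnectedComponents.surjective_coe a
  obtain ⟨zb, rfl⟩ := ConnectedComponents.surjective_coe b
  have hsveq : sv za.val = sv zb.val := hab
  -- the cell of this sign vector, inside S
  set cell : Set (Fin n → ℝ) := {x | ∀ k, SignType.sign (f k x - c k) = sv za.val k}
    with hcell
  have hcellS : cell ⊆ S := by
    intro w hw
    rw [memS_iff f c I w]
    intro k
    have hza := (memS_iff f c I za.val).mp za.2 k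
    constructor
    · intro hk
      have : sv za.val k = 0 := by
        simp only [hsv, sign_eq_zero_iff, sub_eq_zero]
        exact hza.1 hk
      have := (hw k).trans this
      rw [sign_eq_zero_iff, sub_eq_zero] at this
      exact this
    · intro hfk
      by_contra hk
      have hne : sv za.val k ≠ 0 := by
        simp only [hsv, Ne, sign_eq_zero_iff, sub_eq_zero]
        exact fun h => hk (hza.2 h)
      apply hne
      rw [← hw k, sign_eq_zero_iff, sub_eq_zero]
      exact hfk
  have hconv : Convex ℝ cell := cell_convex f c (sv za.val)
  set cellS : Set ↥S := Subtype.val ⁻¹' cell with hcellSdef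
  have hpre : IsPreconnected cellS := by
    apply Topology.IsInducing.subtypeVal.isPreconnected_image.mp
    have himg : Subtype.val '' cellS = cell := by
      apply Set.eq_of_subset_of_subset
      · rintro w ⟨v, hv, rfl⟩
        exact hv
      · intro w hw
        exact ⟨⟨w, hcellS hw⟩, hw, rfl⟩
    rw [himg]
    exact hconv.isPreconnected
  have hza_mem : za ∈ cellS := by
    intro k
    rfl
  have hzb_mem : zb ∈ cellS := by
    intro k
    exact (congrFun hsveq.symm k : _)
  have : zb ∈ connectedComponent za := hpre.subset_connectedComponent hza_mem hzb_mem
  exact (ConnectedComponents.coe_eq_coe).mpr (connectedComponent_eq this)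

/-- The total number of extended regions defined by a finite family of
affine hyperplanes in ℝ^n is bounded by
∑_{p=0}^{n} binom(m,p) · ∑_{i=0}^{n−p} binom(m−p,i). -/
theorem extended_regions_card_le
    (n m : ℕ)
    (f : Fin m → ((Fin n → ℝ) →ₗ[ℝ] ℝ))
    (hf : ∀ k, f k ≠ 0)
    (c : Fin m → ℝ) :
    (∀ I : Finset (Fin m), Finite (ConnectedComponents
      ↥((⋂ k ∈ I, {x : Fin n → ℝ | f k x = c k}) \
        (⋃ k ∈ Iᶜ, {x : Fin n → ℝ | f k x = c k})))) ∧
    ∑ I : Finset (Fin m),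
      Nat.card (ConnectedComponents
        ↥((⋂ k ∈ I, {x : Fin n → ℝ | f k x = c k}) \
          (⋃ k ∈ Iᶜ, {x : Fin n → ℝ | f k x = c k})))
      ≤ ∑ p ∈ Finset.range (n + 1),
          Nat.choose m p *
            ∑ i ∈ Finset.range (n - p + 1), Nat.choose (m - p) i := by
  classical
  have hφ := component_injection f c
  constructor
  · intro I
    obtain ⟨φ, hinj, -⟩ := hφ I
    exact Finite.of_injective φ hinj
  · set T : Finset (Fin m → SignType) :=
      Finset.univ.filter
        (fun σ => ∃ x : Fin n → ℝ, ∀ k, SignType.sign (f k x - c k) = σ k) with hT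
    have hTcard : T.card ≤ Bf n m := by
      have hcoe : (↑T : Set (Fin m → SignType)) = Rz n m f c := by
        ext σ
        simp [hT, Rz]
      have h := Rz_ncard_le m n f c
      rw [← hcoe, Set.ncard_coe_finset] at h
      exact h
    have hfiber : ∑ I : Finset (Fin m),
        (T.filter (fun σ => Finset.univ.filter (fun k => σ k = 0) = I)).card = T.card :=
      (Finset.card_eq_sum_card_fiberwise fun σ _ => Finset.mem_univ _).symm
    have hperI : ∀ I : Finset (Fin m),
        Nat.card (ConnectedComponents
          ↥((⋂ k ∈ I, {x : Fin n → ℝ | f k x = c k}) \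
            (⋃ k ∈ Iᶜ, {x : Fin n → ℝ | f k x = c k})))
          ≤ (T.filter (fun σ => Finset.univ.filter (fun k => σ k = 0) = I)).card := by
      intro I
      obtain ⟨φ, hinj, hφmk⟩ := hφ I
      have hmem : ∀ a, φ a ∈ T.filter
          (fun σ => Finset.univ.filter (fun k => σ k = 0) = I) := by
        intro a
        obtain ⟨z, rfl⟩ := ConnectedComponents.surjective_coe a
        rw [hφmk z, Finset.mem_filter]
        refine ⟨Finset.mem_filter.mpr ⟨Finset.mem_univ _, ⟨z.val, fun k => rfl⟩⟩, ?_⟩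
        ext k
        simp only [Finset.mem_filter, Finset.mem_univ, true_and]
        rw [sign_eq_zero_iff, sub_eq_zero]
        exact ((memS_iff f c I z.val).mp z.2 k).symm
      have hψ : Function.Injective
          (fun a => (⟨φ a, hmem a⟩ :
            {σ // σ ∈ T.filter (fun σ => Finset.univ.filter (fun k => σ k = 0) = I)})) :=
        fun a b h => hinj (congrArg Subtype.val h)
      calc Nat.card _ ≤ Nat.card
            {σ // σ ∈ T.filter (fun σ => Finset.univ.filter (fun k => σ k = 0) = I)} :=
              Nat.card_le_card_of_injective _ hψ
        _ = (T.filter (fun σ => Finset.univ.filter (fun k => σ k = 0) = I)).card := by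
              rw [Nat.card_eq_fintype_card, Fintype.card_coe]
    calc ∑ I : Finset (Fin m), Nat.card (ConnectedComponents
          ↥((⋂ k ∈ I, {x : Fin n → ℝ | f k x = c k}) \
            (⋃ k ∈ Iᶜ, {x : Fin n → ℝ | f k x = c k})))
        ≤ ∑ I : Finset (Fin m),
            (T.filter (fun σ => Finset.univ.filter (fun k => σ k = 0) = I)).card :=
          Finset.sum_le_sum fun I _ => hperI I
      _ = T.card := hfiber
      _ ≤ Bf n m := hTcard
      _ = _ := (rhs_eq_Bf n m).symm
end

section
/- For all natural numbers n and m with m ≥ 1, the inequality ∑_{p=0}^{n} binom(m, p) · ∑_{i=0}^{n−p} binom(m−p, i) ≤ e² · mⁿ holds, where e is the base of the natural logarithm. -/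
/-- For m ≥ 1, ∑_{p=0}^{n} binom(m,p) · ∑_{i=0}^{n−p} binom(m−p,i) ≤ e² · mⁿ. -/
theorem sum_binom_le_exp_two_mul_pow
    (n m : ℕ) (hm : 1 ≤ m) :
    ((∑ p ∈ Finset.range (n + 1),
        Nat.choose m p *
          ∑ i ∈ Finset.range (n - p + 1), Nat.choose (m - p) i : ℕ) : ℝ)
      ≤ Real.exp 2 * (m : ℝ) ^ n := by
  have hm' : (1 : ℝ) ≤ (m : ℝ) := by exact_mod_cast hm
  have hm0 : (0 : ℝ) ≤ (m : ℝ) := by positivity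
  push_cast
  have hterm : ∀ p ∈ Finset.range (n + 1),
      (Nat.choose m p : ℝ) * ∑ i ∈ Finset.range (n - p + 1), (Nat.choose (m - p) i : ℝ)
        ≤ (m : ℝ) ^ n / p.factorial * Real.exp 1 := by
    intro p hp
    have hpn : p ≤ n := Nat.lt_succ_iff.mp (Finset.mem_range.mp hp)
    have h1 : (Nat.choose m p : ℝ) ≤ (m : ℝ) ^ p / p.factorial := by
      have := Nat.choose_le_pow_div (α := ℝ) p m
      push_cast at this ⊢; exact this
    have h2 : ∑ i ∈ Finset.range (n - p + 1), (Nat.choose (m - p) i : ℝ)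
        ≤ (m : ℝ) ^ (n - p) * Real.exp 1 := by
      calc ∑ i ∈ Finset.range (n - p + 1), (Nat.choose (m - p) i : ℝ)
          ≤ ∑ i ∈ Finset.range (n - p + 1), (m : ℝ) ^ (n - p) * (1 ^ i / i.factorial) := by
            apply Finset.sum_le_sum
            intro i hi
            have hin : i ≤ n - p := Nat.lt_succ_iff.mp (Finset.mem_range.mp hi)
            have hc : (Nat.choose (m - p) i : ℝ) ≤ ((m - p : ℕ) : ℝ) ^ i / i.factorial := by
              have := Nat.choose_le_pow_div (α := ℝ) i (m - p)
              push_cast at this ⊢; exact this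
            have hmp : ((m - p : ℕ) : ℝ) ≤ (m : ℝ) := by exact_mod_cast Nat.sub_le m p
            have hmp0 : (0 : ℝ) ≤ ((m - p : ℕ) : ℝ) := by positivity
            calc (Nat.choose (m - p) i : ℝ) ≤ ((m - p : ℕ) : ℝ) ^ i / i.factorial := hc
              _ ≤ (m : ℝ) ^ i / i.factorial := by
                  gcongr
              _ ≤ (m : ℝ) ^ (n - p) / i.factorial := by
                  gcongr
              _ = (m : ℝ) ^ (n - p) * (1 ^ i / i.factorial) := by ring
        _ = (m : ℝ) ^ (n - p) * ∑ i ∈ Finset.range (n - p + 1), (1 : ℝ) ^ i / i.factorial := by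
            rw [Finset.mul_sum]
        _ ≤ (m : ℝ) ^ (n - p) * Real.exp 1 := by
            gcongr
            exact Real.sum_le_exp_of_nonneg zero_le_one _
    calc (Nat.choose m p : ℝ) * ∑ i ∈ Finset.range (n - p + 1), (Nat.choose (m - p) i : ℝ)
        ≤ ((m : ℝ) ^ p / p.factorial) * ((m : ℝ) ^ (n - p) * Real.exp 1) := by
          apply mul_le_mul h1 h2 (by positivity) (by positivity)
      _ = (m : ℝ) ^ n / p.factorial * Real.exp 1 := by
          have : (m : ℝ) ^ p * (m : ℝ) ^ (n - p) = (m : ℝ) ^ n := by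
            rw [← pow_add, Nat.add_sub_cancel' hpn]
          field_simp
          nlinarith [this, Real.exp_pos 1]
  calc ∑ p ∈ Finset.range (n + 1),
        (Nat.choose m p : ℝ) * ∑ i ∈ Finset.range (n - p + 1), (Nat.choose (m - p) i : ℝ)
      ≤ ∑ p ∈ Finset.range (n + 1), (m : ℝ) ^ n / p.factorial * Real.exp 1 :=
        Finset.sum_le_sum hterm
    _ = (∑ p ∈ Finset.range (n + 1), (1 : ℝ) ^ p / p.factorial) * ((m : ℝ) ^ n * Real.exp 1) := by
        rw [Finset.sum_mul]
        apply Finset.sum_congr rfl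
        intro p _
        ring
    _ ≤ Real.exp 1 * ((m : ℝ) ^ n * Real.exp 1) := by
        gcongr
        exact Real.sum_le_exp_of_nonneg zero_le_one _
    _ = Real.exp 2 * (m : ℝ) ^ n := by
        rw [show (2 : ℝ) = 1 + 1 by norm_num, Real.exp_add]
        ring
end

section
/- Let n, m be natural numbers with m ≥ 1 and let H_1, …, H_m be affine hyperplanes in ℝ^n, i.e. for each k there is a nonzero linear functional f_k on ℝ^n and a real constant c_k with H_k = {x ∈ ℝ^n | f_k(x) = c_k}. For each subset I of {1, …, m}, let N(I) denote the cardinality of the set of connected components of (⋂_{k ∈ I} H_k) \ (⋃_{k ∉ I} H_k), with the convention that the intersection over the empty set is ℝ^n. Then the total number of extended regions satisfies ∑_{I ⊆ {1,…,m}} N(I) ≤ e² · mⁿ, where e is Euler's number. -/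
set_option maxHeartbeats 1000000
section ExtendedRegionsAux

def expB (m n : ℕ) : ℕ := ∑ i ∈ Finset.range (n+1), m.choose i * 2^i

lemma expB_succ (m n : ℕ) : expB (m+1) (n+1) = expB m (n+1) + 2 * expB m n := by
  unfold expB
  rw [Finset.sum_range_succ' (fun i => (m+1).choose i * 2^i) (n+1),
      Finset.sum_range_succ' (fun i => m.choose i * 2^i) (n+1)]
  have h1 : ∀ i, (m+1).choose (i+1) * 2^(i+1)
      = m.choose (i+1) * 2^(i+1) + m.choose i * 2^(i+1) := by
    intro i; rw [Nat.choose_succ_succ']; ring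
  rw [Finset.sum_congr rfl (fun i _ => h1 i), Finset.sum_add_distrib]
  have h2 : ∑ i ∈ Finset.range (n+1), m.choose i * 2^(i+1)
      = 2 * ∑ i ∈ Finset.range (n+1), m.choose i * 2^i := by
    rw [Finset.mul_sum]; exact Finset.sum_congr rfl (fun i _ => by ring)
  rw [h2]
  simp only [Nat.choose_zero_right, pow_zero, mul_one]
  ring

lemma expB_mono_left (m n : ℕ) : expB m n ≤ expB (m+1) n := by
  apply Finset.sum_le_sum
  intro i _
  exact Nat.mul_le_mul_right _ (Nat.choose_le_choose i (Nat.le_succ m))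

lemma expB_pos (m n : ℕ) : 1 ≤ expB m n := by
  unfold expB
  calc 1 = m.choose 0 * 2^0 := by simp
  _ ≤ _ := Finset.single_le_sum (f := fun i => m.choose i * 2^i) (fun i _ => Nat.zero_le _) (by simp)

lemma convex_sign_preimage {V : Type*} [AddCommGroup V] [Module ℝ V]
    (ℓ : V →ₗ[ℝ] ℝ) (b : ℝ) (s : SignType) :
    Convex ℝ {x | SignType.sign (ℓ x + b) = s} := by
  intro x hx y hy a a' ha ha' hab
  simp only [Set.mem_setOf_eq] at hx hy ⊢
  have key : ℓ (a • x + a' • y) + b = a * (ℓ x + b) + a' * (ℓ y + b) := by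
    simp only [map_add, map_smul, smul_eq_mul]
    have : a * b + a' * b = b := by rw [← add_mul, hab, one_mul]
    linarith
  rw [key]
  cases s with
  | zero =>
    show SignType.sign _ = (0 : SignType)
    rw [sign_eq_zero_iff]
    rw [show SignType.zero = (0:SignType) from rfl, sign_eq_zero_iff] at hx hy
    rw [hx, hy]; ring
  | pos =>
    show SignType.sign _ = (1 : SignType)
    rw [sign_eq_one_iff]
    rw [show SignType.pos = (1:SignType) from rfl, sign_eq_one_iff] at hx hy
    rcases eq_or_lt_of_le ha with h | h
    · have h1 : a' = 1 := by linarith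
      rw [← h, h1]; simpa using hy
    · exact add_pos_of_pos_of_nonneg (mul_pos h hx) (mul_nonneg ha' hy.le)
  | neg =>
    show SignType.sign _ = (-1 : SignType)
    rw [sign_eq_neg_one_iff]
    rw [show SignType.neg = (-1:SignType) from rfl, sign_eq_neg_one_iff] at hx hy
    rcases eq_or_lt_of_le ha with h | h
    · have h1 : a' = 1 := by linarith
      rw [← h, h1]; simpa using hy
    · nlinarith

lemma sign_range_card (m : ℕ) :
    ∀ (n : ℕ) (V : Type) [AddCommGroup V] [Module ℝ V] [FiniteDimensional ℝ V],
    Module.finrank ℝ V ≤ n → ∀ (ℓ : Fin m → V →ₗ[ℝ] ℝ) (b : Fin m → ℝ),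
    (Set.range (fun x (k : Fin m) => SignType.sign (ℓ k x + b k))).ncard ≤ expB m n := by
  induction m with
  | zero =>
    intro n V _ _ _ _ ℓ b
    have hsub : (Set.range fun (x : V) (k : Fin 0) => SignType.sign (ℓ k x + b k)).Subsingleton :=
      fun σ _ τ _ => funext fun k => k.elim0
    rcases hsub.eq_empty_or_singleton with h | ⟨σ, h⟩ <;>
      simp [h, expB_pos 0 n, Set.ncard_singleton] <;> exact expB_pos 0 n
  | succ m IH =>
    intro n V _ _ _ hV ℓ b
    cases n with
    | zero =>
      have hVsub : Subsingleton V := Module.finrank_zero_iff.1 (Nat.le_zero.1 hV)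
      have hsub : (Set.range fun (x : V) (k : Fin (m+1)) =>
          SignType.sign (ℓ k x + b k)).Subsingleton := by
        rintro σ ⟨x, rfl⟩ τ ⟨y, rfl⟩
        rw [Subsingleton.elim x y]
      rcases hsub.eq_empty_or_singleton with h | ⟨σ, h⟩ <;>
        simp [h, Set.ncard_singleton] <;> exact expB_pos _ _
    | succ n =>
      classical
      set F := fun (x : V) (k : Fin (m+1)) => SignType.sign (ℓ k x + b k) with hF
      set G := fun (x : V) (k : Fin m) =>
        SignType.sign (ℓ k.castSucc x + b k.castSucc) with hG
      have hA' : (Set.range G).ncard ≤ expB m (n+1) :=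
        IH (n+1) V hV (fun k => ℓ k.castSucc) (fun k => b k.castSucc)
      by_cases hg : ℓ (Fin.last m) = 0
      · -- last functional is zero: last sign is constant
        have hcomp : F = (fun σ : Fin m → SignType =>
            (Fin.snoc σ (SignType.sign (b (Fin.last m))) : Fin (m+1) → SignType)) ∘ G := by
          funext x
          refine funext fun k => ?_
          refine Fin.lastCases ?_ (fun i => ?_) k
          · simp [hF, hg, Fin.snoc_last]
          · simp [hF, hG, Fin.snoc_castSucc]
        calc (Set.range F).ncard
            = ((fun σ : Fin m → SignType =>
                (Fin.snoc σ (SignType.sign (b (Fin.last m))) : Fin (m+1) → SignType)) '' Set.range G).ncard := by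
              rw [hcomp, Set.range_comp]
          _ ≤ (Set.range G).ncard := Set.ncard_image_le (Set.toFinite _)
          _ ≤ expB m (n+1) := hA'
          _ ≤ expB (m+1) (n+1) := expB_mono_left _ _
      · -- last functional nonzero
        obtain ⟨y₀, hy₀⟩ : ∃ y₀, ℓ (Fin.last m) y₀ ≠ 0 := by
          by_contra h; push_neg at h; exact hg (LinearMap.ext h)
        set g := ℓ (Fin.last m) with hgdef
        set β := b (Fin.last m) with hβdef
        set x₀ : V := (-β / g y₀) • y₀ with hx₀def
        have hx₀ : g x₀ + β = 0 := by
          rw [hx₀def, map_smul, smul_eq_mul, div_mul_cancel₀ _ hy₀]; ring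
        set K := LinearMap.ker g with hKdef
        have hK : Module.finrank ℝ K ≤ n := by
          have h1 := LinearMap.finrank_range_add_finrank_ker g
          have h2 : LinearMap.range g ≠ ⊥ := by
            intro hbot
            apply hy₀
            have hmem : g y₀ ∈ LinearMap.range g := LinearMap.mem_range_self g y₀
            rw [hbot] at hmem
            simpa using hmem
          have h3 : 0 < Module.finrank ℝ (LinearMap.range g) :=
            Module.finrank_pos_iff.2 (Submodule.nontrivial_iff_ne_bot.2 h2)
          have h4 : Module.finrank ℝ K = Module.finrank ℝ (LinearMap.ker g) := rfl
          rw [h4]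
          omega
        set ℓ' : Fin m → K →ₗ[ℝ] ℝ := fun k => (ℓ k.castSucc).comp K.subtype with hℓ'
        set b' : Fin m → ℝ := fun k => ℓ k.castSucc x₀ + b k.castSucc with hb'
        set F' := fun (u : K) (k : Fin m) => SignType.sign (ℓ' k u + b' k) with hF'
        have hA'' : (Set.range F').ncard ≤ expB m n := IH n K hK ℓ' b'
        set p : (Fin (m+1) → SignType) → (Fin m → SignType) :=
          fun σ k => σ k.castSucc with hp
        have mem_rest : ∀ x : V, g x + β = 0 →
            (fun k : Fin m => SignType.sign (ℓ k.castSucc x + b k.castSucc))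
              ∈ Set.range F' := by
          intro x hx
          have hu : x - x₀ ∈ K := by
            rw [hKdef, LinearMap.mem_ker, map_sub]
            linarith [hx₀]
          refine ⟨⟨x - x₀, hu⟩, ?_⟩
          funext k
          simp only [hF', hℓ', hb', LinearMap.comp_apply, Submodule.coe_subtype, map_sub]
          congr 1
          ring
        set As : SignType → Set (Fin (m+1) → SignType) :=
          fun s => {σ ∈ Set.range F | σ (Fin.last m) = s} with hAs
        have hsplit : Set.range F ⊆ As 0 ∪ As 1 ∪ As (-1) := by
          intro σ hσ
          cases h : σ (Fin.last m) with
          | zero => exact Or.inl (Or.inl ⟨hσ, h⟩)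
          | pos => exact Or.inl (Or.inr ⟨hσ, h⟩)
          | neg => exact Or.inr ⟨hσ, h⟩
        have hinj : ∀ s, (p '' As s).ncard = (As s).ncard := by
          intro s
          refine Set.ncard_image_of_injOn ?_
          intro σ hσ τ hτ h
          funext k
          refine Fin.lastCases (hσ.2.trans hτ.2.symm) (fun i => ?_) k
          exact congrFun h i
        have h0 : p '' As 0 ⊆ Set.range F' := by
          rintro σ' ⟨σ, ⟨⟨x, rfl⟩, hlast⟩, rfl⟩
          have hx : g x + β = 0 := by
            have := hlast
            simp only [hF] at this
            rwa [sign_eq_zero_iff] at this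
          exact mem_rest x hx
        have hcup : p '' As 1 ∪ p '' As (-1) ⊆ Set.range G := by
          rintro σ' (⟨σ, ⟨⟨x, rfl⟩, _⟩, rfl⟩ | ⟨σ, ⟨⟨x, rfl⟩, _⟩, rfl⟩) <;> exact ⟨x, rfl⟩
        have hcap : p '' As 1 ∩ p '' As (-1) ⊆ Set.range F' := by
          rintro σ' ⟨⟨σ₁, ⟨⟨x, rfl⟩, hl1⟩, hp1⟩, ⟨σ₂, ⟨⟨y, rfl⟩, hl2⟩, hp2⟩⟩
          have hu : 0 < g x + β := by
            have := hl1; simp only [hF] at this; rwa [sign_eq_one_iff] at this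
          have hv : g y + β < 0 := by
            have := hl2; simp only [hF] at this; rwa [sign_eq_neg_one_iff] at this
          set u := g x + β; set v := g y + β
          have huv : 0 < u - v := by linarith
          set t : ℝ := u / (u - v) with htdef
          have ht0 : 0 < t := div_pos hu huv
          have ht1 : t < 1 := (div_lt_one huv).2 (by linarith)
          set z := (1 - t) • x + t • y with hz
          have hgz : g z + β = 0 := by
            rw [hz, map_add, map_smul, map_smul, smul_eq_mul, smul_eq_mul]
            have : (1 - t) * g x + t * g y + β = (1 - t) * u + t * v := by ring
            rw [this, htdef]
            field_simp
            ring
          have hsigns : ∀ k : Fin m,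
              SignType.sign (ℓ k.castSucc z + b k.castSucc) = σ' k := by
            intro k
            have hxk : x ∈ {w | SignType.sign (ℓ k.castSucc w + b k.castSucc) = σ' k} :=
              congrFun hp1 k
            have hyk : y ∈ {w | SignType.sign (ℓ k.castSucc w + b k.castSucc) = σ' k} :=
              congrFun hp2 k
            exact convex_sign_preimage (ℓ k.castSucc) (b k.castSucc) (σ' k)
              hxk hyk (by linarith) (le_of_lt ht0) (by ring)
          obtain ⟨w, hw⟩ := mem_rest z hgz
          exact ⟨w, by rw [hw]; funext k; exact hsigns k⟩
        -- counting
        have hcount1 : (Set.range F).ncard ≤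
            (As 0).ncard + ((As 1).ncard + (As (-1)).ncard) := by
          calc (Set.range F).ncard ≤ (As 0 ∪ As 1 ∪ As (-1)).ncard :=
                Set.ncard_le_ncard hsplit (Set.toFinite _)
            _ ≤ (As 0 ∪ As 1).ncard + (As (-1)).ncard := Set.ncard_union_le _ _
            _ ≤ (As 0).ncard + (As 1).ncard + (As (-1)).ncard := by
                have := Set.ncard_union_le (As 0) (As 1); omega
            _ = _ := by omega
        have hcount2 : (As 1).ncard + (As (-1)).ncard ≤ expB m (n+1) + expB m n := by
          rw [← hinj 1, ← hinj (-1)]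
          have := Set.ncard_union_add_ncard_inter (p '' As 1) (p '' As (-1))
            (Set.toFinite _) (Set.toFinite _)
          have hle1 : (p '' As 1 ∪ p '' As (-1)).ncard ≤ expB m (n+1) :=
            le_trans (Set.ncard_le_ncard hcup (Set.toFinite _)) hA'
          have hle2 : (p '' As 1 ∩ p '' As (-1)).ncard ≤ expB m n :=
            le_trans (Set.ncard_le_ncard hcap (Set.toFinite _)) hA''
          omega
        have hcount0 : (As 0).ncard ≤ expB m n := by
          rw [← hinj 0]
          exact le_trans (Set.ncard_le_ncard h0 (Set.toFinite _)) hA''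
        rw [expB_succ]
        omega

lemma expB_le_exp (m n : ℕ) (hm : 1 ≤ m) :
    (expB m n : ℝ) ≤ Real.exp 2 * (m : ℝ) ^ n := by
  have hm1 : (1 : ℝ) ≤ (m : ℝ) := by exact_mod_cast hm
  have hcast : (expB m n : ℝ) = ∑ i ∈ Finset.range (n+1), (m.choose i : ℝ) * 2 ^ i := by
    unfold expB; push_cast; ring
  have hterm : ∀ i ∈ Finset.range (n+1),
      (m.choose i : ℝ) * 2 ^ i ≤ (m : ℝ) ^ n * (2 ^ i / i.factorial) := by
    intro i hi
    rw [Finset.mem_range] at hi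
    have h1 : (m.choose i : ℝ) ≤ (m : ℝ) ^ i / i.factorial := by
      have := Nat.choose_le_pow_div (α := ℝ) i m
      simpa using this
    have h2 : ((m : ℝ) ^ i) ≤ (m : ℝ) ^ n := pow_le_pow_right₀ hm1 (by omega)
    have h4 : (0:ℝ) ≤ (2:ℝ) ^ i / i.factorial := by positivity
    calc (m.choose i : ℝ) * 2 ^ i ≤ ((m:ℝ)^i / i.factorial) * 2^i :=
          mul_le_mul_of_nonneg_right h1 (by positivity)
      _ = (m:ℝ)^i * ((2:ℝ)^i / i.factorial) := by ring
      _ ≤ (m:ℝ)^n * ((2:ℝ)^i / i.factorial) := mul_le_mul_of_nonneg_right h2 h4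
  calc (expB m n : ℝ)
      = ∑ i ∈ Finset.range (n+1), (m.choose i : ℝ) * 2 ^ i := hcast
    _ ≤ ∑ i ∈ Finset.range (n+1), (m : ℝ) ^ n * (2 ^ i / i.factorial) :=
        Finset.sum_le_sum hterm
    _ = (m : ℝ) ^ n * ∑ i ∈ Finset.range (n+1), (2:ℝ) ^ i / i.factorial := by
        rw [Finset.mul_sum]
    _ ≤ (m : ℝ) ^ n * Real.exp 2 := by
        apply mul_le_mul_of_nonneg_left (Real.sum_le_exp_of_nonneg (by norm_num) (n+1))
        positivity
    _ = Real.exp 2 * (m : ℝ) ^ n := by ring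

end ExtendedRegionsAux

/-- The total number of extended regions defined by m ≥ 1 affine hyperplanes
in ℝ^n is at most e² · mⁿ. -/
theorem extended_regions_card_le_exp
    (n m : ℕ) (hm : 1 ≤ m)
    (f : Fin m → ((Fin n → ℝ) →ₗ[ℝ] ℝ))
    (hf : ∀ k, f k ≠ 0)
    (c : Fin m → ℝ) :
    (∀ I : Finset (Fin m), Finite (ConnectedComponents
      ↥((⋂ k ∈ I, {x : Fin n → ℝ | f k x = c k}) \
        (⋃ k ∈ Iᶜ, {x : Fin n → ℝ | f k x = c k})))) ∧
    ((∑ I : Finset (Fin m),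
        Nat.card (ConnectedComponents
          ↥((⋂ k ∈ I, {x : Fin n → ℝ | f k x = c k}) \
            (⋃ k ∈ Iᶜ, {x : Fin n → ℝ | f k x = c k}))) : ℕ) : ℝ)
      ≤ Real.exp 2 * (m : ℝ) ^ n := by
  classical
  set S : Finset (Fin m) → Set (Fin n → ℝ) := fun I =>
    (⋂ k ∈ I, {x : Fin n → ℝ | f k x = c k}) \
      (⋃ k ∈ Iᶜ, {x : Fin n → ℝ | f k x = c k}) with hS
  set Φ : (Fin n → ℝ) → (Fin m → SignType) :=
    fun x k => SignType.sign (f k x - c k) with hΦ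
  have mem_S : ∀ (I : Finset (Fin m)) (x : Fin n → ℝ),
      x ∈ S I ↔ (∀ k ∈ I, f k x = c k) ∧ (∀ k, k ∉ I → f k x ≠ c k) := by
    intro I x
    simp only [hS, Set.mem_diff, Set.mem_iInter, Set.mem_iUnion, Set.mem_setOf_eq,
      Finset.mem_compl, not_exists]
  -- sign vectors determine membership in S I and are constant on connected subsets
  have same_comp : ∀ (I : Finset (Fin m)) (x y : Fin n → ℝ) (hx : x ∈ S I) (hy : y ∈ S I),
      Φ x = Φ y → (ConnectedComponents.mk (⟨x, hx⟩ : ↥(S I)) =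
        ConnectedComponents.mk (⟨y, hy⟩ : ↥(S I))) := by
    intro I x y hx hy hxy
    set Z : Set (Fin n → ℝ) := ⋂ k, {w | SignType.sign (f k w - c k) = Φ x k} with hZ
    have hZconv : Convex ℝ Z := by
      apply convex_iInter
      intro k
      have := convex_sign_preimage (f k) (-(c k)) (Φ x k)
      simpa [sub_eq_add_neg] using this
    have hxZ : x ∈ Z := by simp [hZ, hΦ]
    have hyZ : y ∈ Z := by
      simp only [hZ, Set.mem_iInter, Set.mem_setOf_eq]
      intro k
      exact (congrFun hxy k).symm
    have hZS : Z ⊆ S I := by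
      intro w hw
      simp only [hZ, Set.mem_iInter, Set.mem_setOf_eq] at hw
      rw [mem_S] at hx ⊢
      constructor
      · intro k hk
        have h0 : Φ x k = 0 := by
          simp only [hΦ]
          rw [sign_eq_zero_iff, sub_eq_zero]
          exact hx.1 k hk
        have := hw k
        rw [h0, sign_eq_zero_iff, sub_eq_zero] at this
        exact this
      · intro k hk hc'
        have h0 : Φ x k ≠ 0 := by
          simp only [hΦ]
          rw [Ne, sign_eq_zero_iff, sub_eq_zero]
          exact hx.2 k hk
        apply h0
        rw [← hw k, sign_eq_zero_iff, sub_eq_zero]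
        exact hc'
    -- move to the subtype
    have hZpre : IsPreconnected Z := hZconv.isPreconnected
    haveI : PreconnectedSpace ↥Z := isPreconnected_iff_preconnectedSpace.1 hZpre
    set inc : ↥Z → ↥(S I) := fun w => ⟨w.1, hZS w.2⟩ with hinc
    have hinccont : Continuous inc := Continuous.subtype_mk continuous_subtype_val _
    have hrange : IsPreconnected (Set.range inc) := isPreconnected_range hinccont
    have hxmem : (⟨x, hx⟩ : ↥(S I)) ∈ Set.range inc := ⟨⟨x, hxZ⟩, rfl⟩
    have hymem : (⟨y, hy⟩ : ↥(S I)) ∈ Set.range inc := ⟨⟨y, hyZ⟩, rfl⟩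
    rw [ConnectedComponents.coe_eq_coe]
    exact (connectedComponent_eq (hrange.subset_connectedComponent hymem hxmem)).symm
  -- surjection from realizable sign vectors with zero set I onto components
  have hsurj : ∀ I : Finset (Fin m), ∃ φ : ↥(Φ '' (S I)) → ConnectedComponents ↥(S I),
      Function.Surjective φ := by
    intro I
    refine ⟨fun σ => ConnectedComponents.mk ⟨σ.2.choose, σ.2.choose_spec.1⟩, ?_⟩
    intro comp
    obtain ⟨⟨x, hx⟩, rfl⟩ := ConnectedComponents.surjective_coe comp
    have hσ : Φ x ∈ Φ '' (S I) := ⟨x, hx, rfl⟩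
    refine ⟨⟨Φ x, hσ⟩, ?_⟩
    exact same_comp I _ x hσ.choose_spec.1 hx hσ.choose_spec.2
  have hfin : ∀ I : Finset (Fin m), Finite (ConnectedComponents ↥(S I)) := by
    intro I
    obtain ⟨φ, hφ⟩ := hsurj I
    exact Finite.of_surjective φ hφ
  refine ⟨hfin, ?_⟩
  -- counting
  have hcard : ∀ I : Finset (Fin m),
      Nat.card (ConnectedComponents ↥(S I)) ≤ (Φ '' (S I)).ncard := by
    intro I
    obtain ⟨φ, hφ⟩ := hsurj I
    calc Nat.card (ConnectedComponents ↥(S I)) ≤ Nat.card ↥(Φ '' (S I)) :=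
          Nat.card_le_card_of_surjective φ hφ
      _ = (Φ '' (S I)).ncard := Nat.card_coe_set_eq _
  set R : Finset (Fin m → SignType) := (Set.toFinite (Set.range Φ)).toFinset with hR
  set zs : (Fin m → SignType) → Finset (Fin m) :=
    fun σ => Finset.univ.filter (fun k => σ k = 0) with hzs
  have himage : ∀ I : Finset (Fin m),
      Φ '' (S I) = ↑(R.filter (fun σ => zs σ = I)) := by
    intro I
    ext σ
    simp only [Finset.coe_filter, Set.mem_setOf_eq, hR, Set.Finite.mem_toFinset]
    constructor
    · rintro ⟨x, hx, rfl⟩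
      refine ⟨⟨x, rfl⟩, ?_⟩
      ext k
      simp only [hzs, Finset.mem_filter, Finset.mem_univ, true_and, hΦ]
      rw [mem_S] at hx
      rw [sign_eq_zero_iff, sub_eq_zero]
      constructor
      · intro h
        by_contra hk
        exact hx.2 k hk h
      · intro hk
        exact hx.1 k hk
    · rintro ⟨⟨x, rfl⟩, hzsI⟩
      refine ⟨x, ?_, rfl⟩
      rw [mem_S]
      constructor
      · intro k hk
        rw [← hzsI] at hk
        simp only [hzs, Finset.mem_filter, Finset.mem_univ, true_and, hΦ] at hk
        rwa [sign_eq_zero_iff, sub_eq_zero] at hk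
      · intro k hk hc'
        rw [← hzsI] at hk
        apply hk
        simp only [hzs, Finset.mem_filter, Finset.mem_univ, true_and, hΦ]
        rw [sign_eq_zero_iff, sub_eq_zero]
        exact hc'
  have hsum : ∑ I : Finset (Fin m), (Φ '' (S I)).ncard = R.card := by
    rw [Finset.card_eq_sum_card_fiberwise (f := zs) (t := Finset.univ)
      (fun σ _ => Finset.mem_univ _)]
    apply Finset.sum_congr rfl
    intro I _
    rw [himage I, Set.ncard_coe_finset]
  have hRcard : R.card ≤ expB m n := by
    have h := sign_range_card m n (Fin n → ℝ)
      (le_of_eq (Module.finrank_fin_fun ℝ)) f (fun j => -(c j))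
    have heq : Φ = fun x (k : Fin m) => SignType.sign (f k x + (fun j => -(c j)) k) := by
      funext x k
      simp [hΦ, sub_eq_add_neg]
    rw [← heq] at h
    rw [hR, ← Set.ncard_eq_toFinset_card (Set.range Φ) (Set.toFinite _)]
    exact h
  have htot : (∑ I : Finset (Fin m), Nat.card (ConnectedComponents ↥(S I))) ≤ expB m n := by
    calc ∑ I : Finset (Fin m), Nat.card (ConnectedComponents ↥(S I))
        ≤ ∑ I : Finset (Fin m), (Φ '' (S I)).ncard := Finset.sum_le_sum (fun I _ => hcard I)
      _ = R.card := hsum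
      _ ≤ expB m n := hRcard
  calc ((∑ I : Finset (Fin m), Nat.card (ConnectedComponents ↥(S I)) : ℕ) : ℝ)
      ≤ (expB m n : ℝ) := by exact_mod_cast htot
    _ ≤ Real.exp 2 * (m : ℝ) ^ n := expB_le_exp m n hm
end

section
/- Let n be a natural number with n ≥ 2, let U and A be real numbers with U ≥ 2 and A ≥ 1, and let p : {1, …, n} → ℝ be a sequence of nonnegative reals satisfying: (i) p(n) ≤ A · U^(2^n), and (ii) for every k with 1 ≤ k < n, p(k) ≤ (A + U · ∑_{j=k+1}^{n} p(j)·(p(j) − 1)/2) · U^(2^k). Then for every k with 1 ≤ k ≤ n, p(k) ≤ A^(2^(n−k)) · U^(2^(n·(n−k+1))). -/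
/-- Arithmetic content of the size analysis of the saturation procedure
(Lemma `terminate`): the recurrence on the sizes p(k) of the expression
sets implies p(k) ≤ A^(2^(n−k)) · U^(2^(n·(n−k+1))). -/
theorem saturation_size_bound
    (n : ℕ) (hn : 2 ≤ n)
    (U A : ℝ) (hU : 2 ≤ U) (hA : 1 ≤ A)
    (p : ℕ → ℝ)
    (hpos : ∀ k, 1 ≤ k → k ≤ n → 0 ≤ p k)
    (htop : p n ≤ A * U ^ (2 ^ n))
    (hrec : ∀ k, 1 ≤ k → k < n →
      p k ≤ (A + U * ∑ j ∈ Finset.Icc (k + 1) n, p j * (p j - 1) / 2)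
              * U ^ (2 ^ k)) :
    ∀ k, 1 ≤ k → k ≤ n →
      p k ≤ A ^ (2 ^ (n - k)) * U ^ (2 ^ (n * (n - k + 1))) := by
  have hU1 : (1:ℝ) ≤ U := by linarith
  have hU0 : (0:ℝ) ≤ U := by linarith
  have hA0 : (0:ℝ) ≤ A := by linarith
  have hUpow : ∀ e : ℕ, (1:ℝ) ≤ U ^ e := fun e => one_le_pow₀ hU1
  have hApow : ∀ e : ℕ, (1:ℝ) ≤ A ^ e := fun e => one_le_pow₀ hA
  have hUmono : ∀ e f : ℕ, e ≤ f → U ^ e ≤ U ^ f := fun e f h => pow_le_pow_right₀ hU1 h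
  have hAmono : ∀ e f : ℕ, e ≤ f → A ^ e ≤ A ^ f := fun e f h => pow_le_pow_right₀ hA h
  have key : ∀ m : ℕ, ∀ k, 1 ≤ k → k ≤ n → n - k ≤ m →
      p k ≤ A ^ (2 ^ (n - k)) * U ^ (2 ^ (n * (n - k + 1))) := by
    intro m
    induction m with
    | zero =>
        intro k hk1 hkn hm
        have hk : k = n := by omega
        subst hk
        simpa using htop
    | succ m ih =>
        intro k hk1 hkn hm
        rcases eq_or_lt_of_le hkn with hk | hklt
        · subst hk; simpa using htop
        · set d := n - k with hd
          have hd1 : 1 ≤ d := by omega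
          have hdn : d + 1 ≤ n := by omega
          -- bound each p j for j in (k, n]
          have hbound : ∀ j ∈ Finset.Icc (k+1) n,
              p j ≤ A ^ (2 ^ (d-1)) * U ^ (2 ^ (n*d)) := by
            intro j hj
            rw [Finset.mem_Icc] at hj
            have h1j : 1 ≤ j := by omega
            refine (ih j h1j hj.2 (by omega)).trans ?_
            refine mul_le_mul (hAmono _ _ ?_) (hUmono _ _ ?_)
              (by positivity) (by positivity)
            · exact Nat.pow_le_pow_right (by norm_num) (by omega)
            · exact Nat.pow_le_pow_right (by norm_num)
                (Nat.mul_le_mul_left n (by omega))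
          set B1 : ℝ := A ^ (2 ^ (d-1)) * U ^ (2 ^ (n*d)) with hB1
          have hB10 : (0:ℝ) ≤ B1 := by positivity
          have hsum : (∑ j ∈ Finset.Icc (k+1) n, p j * (p j - 1) / 2)
              ≤ (d:ℝ) * (B1^2 / 2) := by
            have hcard : (Finset.Icc (k+1) n).card = d := by
              rw [Nat.card_Icc]; omega
            calc ∑ j ∈ Finset.Icc (k+1) n, p j * (p j - 1) / 2
                ≤ ∑ _j ∈ Finset.Icc (k+1) n, B1^2 / 2 := by
                  apply Finset.sum_le_sum
                  intro j hj
                  have hj' := hj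
                  rw [Finset.mem_Icc] at hj'
                  have hp0 : 0 ≤ p j := hpos j (by omega) hj'.2
                  have hpB := hbound j hj
                  nlinarith [mul_le_mul hpB hpB hp0 hB10]
              _ = (d:ℝ) * (B1^2 / 2) := by
                  rw [Finset.sum_const, hcard, nsmul_eq_mul]
          -- square of B1
          have hsq : B1^2 = A ^ (2^d) * U ^ (2^(n*d+1)) := by
            have e1 : 2^(d-1) * 2 = 2^d := by
              rw [← pow_succ]; congr 1; omega
            have e2 : 2^(n*d) * 2 = 2^(n*d+1) := by rw [← pow_succ]
            rw [hB1, mul_pow, ← pow_mul, ← pow_mul, e1, e2]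
          set C : ℝ := A ^ (2^d) with hC
          set E : ℝ := U ^ (2^(n*d+1)) with hE
          set P : ℝ := U ^ (2^k) with hP
          set T : ℝ := U ^ (2^(n*d+n)) with hT
          have hC0 : (0:ℝ) ≤ C := by positivity
          -- nat exponent inequality
          have hnat : n + 1 + (2^(n*d+1) + 2^k) ≤ 2^(n*d+n) := by
            have h1 : n ≤ n*d := Nat.le_mul_of_pos_right n (by omega)
            have h3 : n + 1 ≤ 2^n := Nat.lt_two_pow_self (n := n)
            have h4 : 2^k ≤ 2^(n*d) :=
              Nat.pow_le_pow_right (by norm_num) (le_trans hkn h1)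
            have h5 : 2^n ≤ 2^(n*d) := Nat.pow_le_pow_right (by norm_num) h1
            have h6 : 2^(n*d+1) = 2 * 2^(n*d) := by rw [pow_succ]; ring
            have h7 : 2^(n*d+n) = 2^(n*d) * 2^n := by rw [pow_add]
            have h8 : 4 ≤ 2^n := by
              calc 4 = 2^2 := by norm_num
                _ ≤ 2^n := Nat.pow_le_pow_right (by norm_num) hn
            nlinarith [Nat.pow_le_pow_right (show 1 ≤ 2 by norm_num) h1]
          have hcombine : U^n * (U * (E * P)) = U ^ (n + 1 + (2^(n*d+1) + 2^k)) := by
            rw [hE, hP]; ring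
          have hexp : U^n * (U * (E * P)) ≤ T := by
            rw [hcombine, hT]; exact hUmono _ _ hnat
          have hnU : (n:ℝ) ≤ U^n := by
            have h1 : (n:ℝ) ≤ 2^n := by
              exact_mod_cast (Nat.lt_two_pow_self (n := n)).le
            have h2 : (2:ℝ)^n ≤ U^n := pow_le_pow_left₀ (by norm_num) hU n
            linarith
          have hdn' : (1:ℝ) + (d:ℝ)/2 ≤ (n:ℝ) := by
            have h1 : ((d:ℝ) + 1) ≤ (n:ℝ) := by exact_mod_cast hdn
            have h2 : (2:ℝ) ≤ (n:ℝ) := by exact_mod_cast hn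
            linarith
          have hX0 : (0:ℝ) ≤ U * (E * P) := by positivity
          have hbig : ((1:ℝ) + (d:ℝ)/2) * (U * (E * P)) ≤ T := by
            calc ((1:ℝ) + (d:ℝ)/2) * (U * (E * P))
                ≤ (n:ℝ) * (U * (E * P)) := by
                  exact mul_le_mul_of_nonneg_right hdn' hX0
              _ ≤ U^n * (U * (E * P)) := mul_le_mul_of_nonneg_right hnU hX0
              _ ≤ T := hexp
          have hAP : A * P ≤ C * (U * (E * P)) := by
            have h1 : (1:ℝ) ≤ U * E := by
              have := hUpow (2^(n*d+1)); rw [hE]; nlinarith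
            have h2 : P ≤ U * (E * P) := by
              have := mul_le_mul_of_nonneg_right h1 (show (0:ℝ) ≤ P by positivity)
              calc P = 1 * P := (one_mul P).symm
                _ ≤ (U * E) * P := by
                    exact mul_le_mul_of_nonneg_right h1 (by positivity)
                _ = U * (E * P) := by ring
            have h3 : A ≤ C := by
              calc A = A^1 := (pow_one A).symm
                _ ≤ C := hAmono 1 _ Nat.one_le_two_pow
            exact mul_le_mul h3 h2 (by positivity) hC0
          have hfin : A * P + (d:ℝ)/2 * (C * (U * (E * P))) ≤ C * T := by
            have h2 : C * (((1:ℝ) + (d:ℝ)/2) * (U * (E * P))) ≤ C * T :=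
              mul_le_mul_of_nonneg_left hbig hC0
            nlinarith [hAP]
          have hgoal : p k ≤ C * T := by
            calc p k ≤ (A + U * ∑ j ∈ Finset.Icc (k + 1) n, p j * (p j - 1) / 2)
                  * U ^ (2 ^ k) := hrec k hk1 hklt
              _ ≤ (A + U * ((d:ℝ) * (B1^2 / 2))) * P := by
                  rw [hP]
                  apply mul_le_mul_of_nonneg_right _ (by positivity)
                  have := mul_le_mul_of_nonneg_left hsum hU0
                  linarith
              _ = A * P + (d:ℝ)/2 * (C * (U * (E * P))) := by
                  rw [hsq, hC, hE]; ring
              _ ≤ C * T := hfin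
          have hmul : n * (d + 1) = n*d + n := by ring
          rw [hmul]
          exact hgoal
  intro k hk1 hkn
  exact key (n-k) k hk1 hkn le_rfl
end

section
/- Let n be a natural number and let b : ℕ → ℕ be a sequence such that for every k < n, b(k+1) ≤ (n − k + 1)² · (4 · b(k) + 2^(n−k+1) · b(0)). Then b(n) ≤ ((n+1)!)² · (n+1) · 2^(3n+1) · b(0); more precisely, for every k ≤ n one has b(k) ≤ (∏_{j=1}^{k} (n + 2 − j))² · (k+1) · 2^(n+2k+1) · b(0). -/
lemma aux_prod_fact (n : ℕ) :
    ∏ j ∈ Finset.Icc 1 n, (n + 2 - j) = Nat.factorial (n + 1) := by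
  have h1 : ∏ j ∈ Finset.Icc 1 n, (n + 2 - j)
      = ∏ i ∈ Finset.range n, (n + 1 - i) := by
    rw [show Finset.Icc 1 n = Finset.Ico 1 (n + 1) by rfl,
      Finset.prod_Ico_eq_prod_range]
    simp only [Nat.add_sub_cancel]
    apply Finset.prod_congr rfl
    intro i hi
    simp only [Finset.mem_range] at hi
    omega
  have h2 : ∏ i ∈ Finset.range n, (n + 1 - i)
      = ∏ i ∈ Finset.range n, (i + 2) := by
    rw [← Finset.prod_range_reflect (fun j => j + 2) n]
    apply Finset.prod_congr rfl
    intro i hi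
    simp only [Finset.mem_range] at hi
    omega
  have h3 : ∀ m : ℕ, ∏ i ∈ Finset.range m, (i + 2) = Nat.factorial (m + 1) := by
    intro m
    induction m with
    | zero => simp [Nat.factorial]
    | succ m ih =>
        rw [Finset.prod_range_succ, ih, Nat.factorial_succ (m + 1)]
        ring
  rw [h1, h2, h3]

/-- Arithmetic core of the total bit-size bound in the parametric
saturation procedure (Lemma `psize`): if
b(k+1) ≤ (n−k+1)²·(4·b(k) + 2^(n−k+1)·b(0)) for every k < n, then
b(n) ≤ ((n+1)!)²·(n+1)·2^(3n+1)·b(0), and more precisely, for every k ≤ n,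
b(k) ≤ (∏_{j=1}^{k} (n+2−j))²·(k+1)·2^(n+2k+1)·b(0). -/
theorem parametric_bits_bound
    (n : ℕ) (b : ℕ → ℕ)
    (hrec : ∀ k, k < n →
      b (k + 1) ≤ (n - k + 1) ^ 2 * (4 * b k + 2 ^ (n - k + 1) * b 0)) :
    b n ≤ (Nat.factorial (n + 1)) ^ 2 * (n + 1) * 2 ^ (3 * n + 1) * b 0 ∧
    ∀ k, k ≤ n →
      b k ≤ (∏ j ∈ Finset.Icc 1 k, (n + 2 - j)) ^ 2
              * (k + 1) * 2 ^ (n + 2 * k + 1) * b 0 := by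
  have H : ∀ k, k ≤ n →
      b k ≤ (∏ j ∈ Finset.Icc 1 k, (n + 2 - j)) ^ 2
              * (k + 1) * 2 ^ (n + 2 * k + 1) * b 0 := by
    intro k
    induction k with
    | zero =>
        intro _
        have heq : (∏ j ∈ Finset.Icc 1 0, (n + 2 - j)) ^ 2 * (0 + 1)
            * 2 ^ (n + 2 * 0 + 1) * b 0 = 2 ^ (n + 1) * b 0 := by simp
        rw [heq]
        calc b 0 = 1 * b 0 := (one_mul _).symm
          _ ≤ 2 ^ (n + 1) * b 0 := mul_le_mul_left Nat.one_le_two_pow _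
    | succ k ih =>
        intro hk1
        have hk : k < n := hk1
        have IH := ih (le_of_lt hk)
        set P : ℕ := ∏ j ∈ Finset.Icc 1 k, (n + 2 - j) with hP
        have hPpos : 1 ≤ P := by
          apply Finset.one_le_prod'
          intro j hj
          simp only [Finset.mem_Icc] at hj
          omega
        have hprod : ∏ j ∈ Finset.Icc 1 (k + 1), (n + 2 - j)
            = P * (n - k + 1) := by
          rw [Finset.prod_Icc_succ_top (by omega : 1 ≤ k + 1)]
          congr 1
          omega
        have hpow : 2 ^ (n - k + 1) ≤ 2 ^ (n + 2 * k + 1) :=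
          Nat.pow_le_pow_right (by norm_num) (by omega)
        calc b (k + 1) ≤ (n - k + 1) ^ 2 * (4 * b k + 2 ^ (n - k + 1) * b 0) :=
              hrec k hk
          _ ≤ (n - k + 1) ^ 2 * (4 * (P ^ 2 * (k + 1) * 2 ^ (n + 2 * k + 1) * b 0)
                + 2 ^ (n + 2 * k + 1) * b 0) := by
              apply Nat.mul_le_mul_left
              exact Nat.add_le_add (Nat.mul_le_mul_left _ IH)
                (Nat.mul_le_mul_right _ hpow)
          _ ≤ (n - k + 1) ^ 2 * (P ^ 2 * (k + 2) * (4 * 2 ^ (n + 2 * k + 1)) * b 0) := by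
              apply Nat.mul_le_mul_left
              have hP2 : 1 ≤ P ^ 2 := Nat.one_le_pow _ _ (by omega)
              have h1 : 2 ^ (n + 2 * k + 1) * b 0 ≤ P ^ 2 * 2 ^ (n + 2 * k + 1) * b 0 := by
                calc 2 ^ (n + 2 * k + 1) * b 0 = 1 * (2 ^ (n + 2 * k + 1) * b 0) := by ring
                  _ ≤ P ^ 2 * (2 ^ (n + 2 * k + 1) * b 0) := mul_le_mul_left hP2 _
                  _ = P ^ 2 * 2 ^ (n + 2 * k + 1) * b 0 := by ring
              nlinarith
          _ = (∏ j ∈ Finset.Icc 1 (k + 1), (n + 2 - j)) ^ 2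
                * (k + 1 + 1) * 2 ^ (n + 2 * (k + 1) + 1) * b 0 := by
              rw [hprod]
              have : (2 : ℕ) ^ (n + 2 * (k + 1) + 1) = 4 * 2 ^ (n + 2 * k + 1) := by
                rw [show n + 2 * (k + 1) + 1 = (n + 2 * k + 1) + 2 by ring, pow_add]
                ring
              rw [this]
              ring
  refine ⟨?_, H⟩
  have := H n le_rfl
  rwa [aux_prod_fact, show n + 2 * n + 1 = 3 * n + 1 by ring] at this
end
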